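/- Let H be a relevant position of the game influence and let −H be the position obtained from H by exchanging the sets L and R and reversing the orientation of every arc. Then the disjoint union H + (−H) satisfies Ls(H + (−H)) = 0 and Rs(H + (−H)) = 0. -/

import Mathlib

namespace Influence

open Finset

/-- A position of the game `influence`: a finite directed graph with vertex set `V`,
arc set `A`, and the set `left` of Left (black) vertices; Right's vertices are `V \ left`. -/
structure Pos (α : Type) [DecidableEq α] where
  V : Finset α
  A : Finset (α × α)
  left : Finset α

variable {α : Type} [DecidableEq α]

namespace Pos

/-- The set of Right vertices. -/
def R (G : Pos α) : Finset α := G.V \ G.left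

/-- Well-formedness: arcs join vertices, and Left vertices are vertices. -/
def WF (G : Pos α) : Prop :=
  (∀ p ∈ G.A, p.1 ∈ G.V ∧ p.2 ∈ G.V) ∧ G.left ⊆ G.V

open Classical in
/-- `Succ G x`: vertices reachable from `x` by a directed path (including `x` itself). -/
noncomputable def Succ (G : Pos α) (x : α) : Finset α :=
  G.V.filter (fun z => Relation.ReflTransGen (fun a b => (a, b) ∈ G.A) x z)

open Classical in
/-- `Pred G y`: vertices from which `y` is reachable by a directed path (including `y`). -/
noncomputable def Pred (G : Pos α) (y : α) : Finset α :=
  G.V.filter (fun z => Relation.ReflTransGen (fun a b => (a, b) ∈ G.A) z y)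

open Classical in
noncomputable def ForcL (G : Pos α) : Finset α :=
  G.left.filter (fun x => G.Succ x ⊆ G.left)

open Classical in
noncomputable def ForcR (G : Pos α) : Finset α :=
  G.R.filter (fun y => G.Pred y ⊆ G.R)

noncomputable def Forc (G : Pos α) : Finset α := G.ForcL ∪ G.ForcR

/-- A relevant position: no forced vertices. -/
def Relevant (G : Pos α) : Prop := G.Forc = ∅

/-- The induced subgraph `G ∖ S` on `V(G) \ S`. -/
def erase (G : Pos α) (S : Finset α) : Pos α :=
  ⟨G.V \ S, G.A.filter (fun p => p.1 ∈ G.V \ S ∧ p.2 ∈ G.V \ S), G.left \ S⟩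

open Classical in
/-- The set of vertices removed when playing `x`:  for `x ∈ L`,
`Rmv(G,x) = Succ(G,x) ∪ Forc(G ∖ Succ(G,x))`; for `y ∈ R`,
`Rmv(G,y) = Pred(G,y) ∪ Forc(G ∖ Pred(G,y))`. -/
noncomputable def Rmv (G : Pos α) (x : α) : Finset α :=
  if x ∈ G.left then G.Succ x ∪ (G.erase (G.Succ x)).Forc
  else G.Pred x ∪ (G.erase (G.Pred x)).Forc

/-- The resulting relevant position `G_x` after the move `x`. -/
noncomputable def move (G : Pos α) (x : α) : Pos α := G.erase (G.Rmv x)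

mutual
/-- Auxiliary (fuel-indexed) score of Left playing first. -/
noncomputable def sL1Aux : ℕ → Pos α → ℕ
  | 0, _ => 0
  | k + 1, G =>
      if G.left.Nonempty then
        G.left.sup (fun x => (G.Rmv x).card + sL2Aux k (G.move x))
      else 0

/-- Auxiliary (fuel-indexed) score of Left playing second. -/
noncomputable def sL2Aux : ℕ → Pos α → ℕ
  | 0, _ => 0
  | k + 1, G =>
      if h : G.R.Nonempty then G.R.inf' h (fun y => sL1Aux k (G.move y))
      else 0
end

mutual
/-- Auxiliary (fuel-indexed) score of Right playing first. -/
noncomputable def sR1Aux : ℕ → Pos α → ℕ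
  | 0, _ => 0
  | k + 1, G =>
      if G.R.Nonempty then
        G.R.sup (fun y => (G.Rmv y).card + sR2Aux k (G.move y))
      else 0

/-- Auxiliary (fuel-indexed) score of Right playing second. -/
noncomputable def sR2Aux : ℕ → Pos α → ℕ
  | 0, _ => 0
  | k + 1, G =>
      if h : G.left.Nonempty then G.left.inf' h (fun x => sR1Aux k (G.move x))
      else 0
end

/-- `s^L_1(G)`: the score of Left when Left plays first (optimal play). -/
noncomputable def sL1 (G : Pos α) : ℕ := sL1Aux G.V.card G

/-- `s^L_2(G)`: the score of Left when Right plays first (optimal play). -/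
noncomputable def sL2 (G : Pos α) : ℕ := sL2Aux G.V.card G

/-- `s^R_1(G)`: the score of Right when Right plays first (optimal play). -/
noncomputable def sR1 (G : Pos α) : ℕ := sR1Aux G.V.card G

/-- `s^R_2(G)`: the score of Right when Left plays first (optimal play). -/
noncomputable def sR2 (G : Pos α) : ℕ := sR2Aux G.V.card G

/-- The Left score `Ls(G) = s^L_1(G) - s^R_2(G)`. -/
noncomputable def Ls (G : Pos α) : ℤ := (G.sL1 : ℤ) - (G.sR2 : ℤ)

/-- The Right score `Rs(G) = s^L_2(G) - s^R_1(G)`. -/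
noncomputable def Rs (G : Pos α) : ℤ := (G.sL2 : ℤ) - (G.sR1 : ℤ)

/-- Disjoint union (game sum) of two positions. -/
def union (G G' : Pos α) : Pos α := ⟨G.V ∪ G'.V, G.A ∪ G'.A, G.left ∪ G'.left⟩

/-- The empty position. -/
protected def empty : Pos α := ⟨∅, ∅, ∅⟩

end Pos

/-- The sum of a finite list of positions. -/
def sumList (l : List (Pos α)) : Pos α := l.foldr Pos.union Pos.empty

open Classical in
/-- `G` is a segment: its vertex set is a set of at least two consecutive integers,
Left's vertices are the even ones, Right's the odd ones, and there is an arc from each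
even vertex to each of its (odd) neighbours `±1` lying in the vertex set. -/
def IsSegment (G : Pos ℤ) : Prop :=
  2 ≤ G.V.card ∧
  (∀ i j k : ℤ, i ∈ G.V → j ∈ G.V → i ≤ k → k ≤ j → k ∈ G.V) ∧
  G.left = G.V.filter (fun n => Even n) ∧
  G.A = (G.V ×ˢ G.V).filter (fun p => Even p.1 ∧ (p.2 = p.1 + 1 ∨ p.2 = p.1 - 1))

/-- `G` is the finite disjoint union (game sum) of the list `l` of segments. -/
def IsSegUnion (G : Pos ℤ) (l : List (Pos ℤ)) : Prop :=
  (∀ H ∈ l, IsSegment H) ∧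
  l.Pairwise (fun H H' => Disjoint H.V H'.V) ∧
  G = sumList l


open Classical in
/-- `G` is an alternated cycle: obtained from a segment `S` with an even number of
vertices by adding the arc `(x, y)` where `x` is the endpoint of `S` in `L` (even) and
`y` the endpoint in `R` (odd). -/
def IsAltCycle (G : Pos ℤ) : Prop :=
  ∃ (S : Pos ℤ) (x y : ℤ), IsSegment S ∧ Even S.V.card ∧
    x ∈ S.V ∧ y ∈ S.V ∧ Even x ∧ ¬ Even y ∧
    (∀ z ∈ S.V, min x y ≤ z ∧ z ≤ max x y) ∧
    G.V = S.V ∧ G.left = S.left ∧ G.A = insert (x, y) S.A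

open Classical in
/-- `T` is (a copy of) the oriented tree `T_n^c`: a rooted tree of depth `n+1`, all arcs
oriented from parent to child, in which every vertex at level `k ≤ n-1` has exactly `3`
children, every vertex at level `n` has exactly `c` children, the leaves (level `n+1`)
are the Right vertices and all other vertices are Left vertices. -/
def IsTnc (n c : ℕ) (T : Pos α) : Prop :=
  T.WF ∧ ∃ lvl : α → ℕ,
    (∀ v ∈ T.V, lvl v ≤ n + 1) ∧
    T.left = T.V.filter (fun v => lvl v ≤ n) ∧
    (∃! r, r ∈ T.V ∧ lvl r = 0) ∧
    (∀ p ∈ T.A, lvl p.2 = lvl p.1 + 1) ∧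
    (∀ v ∈ T.V, 0 < lvl v → ∃! u, (u, v) ∈ T.A) ∧
    (∀ v ∈ T.V, lvl v < n → (T.V.filter (fun w => (v, w) ∈ T.A)).card = 3) ∧
    (∀ v ∈ T.V, lvl v = n → (T.V.filter (fun w => (v, w) ∈ T.A)).card = c)

/-- `J` is (a copy of) `J_n^c`, the disjoint union of two disjoint copies of `T_n^c`. -/
def IsJnc (n c : ℕ) (J : Pos α) : Prop :=
  ∃ T1 T2 : Pos α, IsTnc n c T1 ∧ IsTnc n c T2 ∧ Disjoint T1.V T2.V ∧ J = T1.union T2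

end Influence

open Influence Influence.Pos Finset
namespace Influence
namespace Pos

variable {α : Type} [DecidableEq α]

/-- reachability relation of a position -/
def Reach (G : Pos α) (a b : α) : Prop :=
  Relation.ReflTransGen (fun a b => (a, b) ∈ G.A) a b

lemma mem_Succ {G : Pos α} {x z : α} : z ∈ G.Succ x ↔ z ∈ G.V ∧ G.Reach x z := by
  classical
  unfold Pos.Succ Reach; exact Finset.mem_filter

lemma mem_Pred {G : Pos α} {x z : α} : z ∈ G.Pred x ↔ z ∈ G.V ∧ G.Reach z x := by
  classical
  unfold Pos.Pred Reach; exact Finset.mem_filter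

lemma mem_ForcL {G : Pos α} {x : α} : x ∈ G.ForcL ↔ x ∈ G.left ∧ G.Succ x ⊆ G.left := by
  classical
  unfold Pos.ForcL; exact Finset.mem_filter

lemma mem_ForcR {G : Pos α} {x : α} : x ∈ G.ForcR ↔ x ∈ G.R ∧ G.Pred x ⊆ G.R := by
  classical
  unfold Pos.ForcR; exact Finset.mem_filter

lemma mem_R {G : Pos α} {x : α} : x ∈ G.R ↔ x ∈ G.V ∧ x ∉ G.left := by
  simp [Pos.R]

@[simp] lemma erase_V (G : Pos α) (S : Finset α) : (G.erase S).V = G.V \ S := rfl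
@[simp] lemma erase_left (G : Pos α) (S : Finset α) : (G.erase S).left = G.left \ S := rfl
lemma erase_A (G : Pos α) (S : Finset α) :
    (G.erase S).A = G.A.filter (fun p => p.1 ∈ G.V \ S ∧ p.2 ∈ G.V \ S) := rfl

lemma erase_R (G : Pos α) (S : Finset α) : (G.erase S).R = G.R \ S := by
  simp only [Pos.R, erase_V, erase_left]
  ext a; simp [Finset.mem_sdiff]; tauto

lemma WF.arc_fst {G : Pos α} (h : G.WF) {p : α × α} (hp : p ∈ G.A) : p.1 ∈ G.V := (h.1 p hp).1
lemma WF.arc_snd {G : Pos α} (h : G.WF) {p : α × α} (hp : p ∈ G.A) : p.2 ∈ G.V := (h.1 p hp).2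
lemma WF.left_sub {G : Pos α} (h : G.WF) : G.left ⊆ G.V := h.2
lemma WF.R_sub {G : Pos α} (h : G.WF) : G.R ⊆ G.V := Finset.sdiff_subset

lemma WF.erase {G : Pos α} (h : G.WF) (S : Finset α) : (G.erase S).WF := by
  constructor
  · intro p hp
    rw [erase_A, Finset.mem_filter] at hp
    exact ⟨hp.2.1, hp.2.2⟩
  · rw [erase_left, erase_V]
    exact Finset.sdiff_subset_sdiff h.2 le_rfl

lemma Reach.mem_V {G : Pos α} (h : G.WF) {a b : α} (hr : G.Reach a b) (ha : a ∈ G.V) :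
    b ∈ G.V := by
  induction hr with
  | refl => exact ha
  | tail _ harc ih => exact h.arc_snd harc

lemma Succ_subset_V {G : Pos α} {x : α} : G.Succ x ⊆ G.V :=
  fun _ h => (mem_Succ.1 h).1
lemma Pred_subset_V {G : Pos α} {x : α} : G.Pred x ⊆ G.V :=
  fun _ h => (mem_Pred.1 h).1
lemma ForcL_subset_left {G : Pos α} : G.ForcL ⊆ G.left :=
  fun _ h => (mem_ForcL.1 h).1
lemma ForcR_subset_R {G : Pos α} : G.ForcR ⊆ G.R :=
  fun _ h => (mem_ForcR.1 h).1

lemma Forc_subset_V {G : Pos α} (h : G.WF) : G.Forc ⊆ G.V := by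
  intro a ha
  rcases Finset.mem_union.1 ha with ha | ha
  · exact h.left_sub (ForcL_subset_left ha)
  · exact h.R_sub (ForcR_subset_R ha)

lemma self_mem_Succ {G : Pos α} {x : α} (hx : x ∈ G.V) : x ∈ G.Succ x :=
  mem_Succ.2 ⟨hx, Relation.ReflTransGen.refl⟩

lemma self_mem_Pred {G : Pos α} {x : α} (hx : x ∈ G.V) : x ∈ G.Pred x :=
  mem_Pred.2 ⟨hx, Relation.ReflTransGen.refl⟩

lemma Succ_trans {G : Pos α} {x b c : α} (hb : b ∈ G.Succ x) (hc : c ∈ G.Succ b) :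
    c ∈ G.Succ x :=
  mem_Succ.2 ⟨(mem_Succ.1 hc).1, ((mem_Succ.1 hb).2).trans (mem_Succ.1 hc).2⟩

lemma Pred_trans {G : Pos α} {x b c : α} (hb : b ∈ G.Pred x) (hc : c ∈ G.Pred b) :
    c ∈ G.Pred x :=
  mem_Pred.2 ⟨(mem_Pred.1 hc).1, ((mem_Pred.1 hc).2).trans (mem_Pred.1 hb).2⟩

lemma mem_Succ_of_reach {G : Pos α} (h : G.WF) {x b c : α} (hb : b ∈ G.Succ x)
    (hr : G.Reach b c) : c ∈ G.Succ x := by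
  rcases mem_Succ.1 hb with ⟨hbV, hxb⟩
  exact mem_Succ.2 ⟨hr.mem_V h hbV, hxb.trans hr⟩

lemma mem_Pred_of_reach {G : Pos α} (h : G.WF) {x b c : α} (hb : b ∈ G.Pred x)
    (hr : G.Reach c b) : c ∈ G.Pred x := by
  rcases mem_Pred.1 hb with ⟨hbV, hbx⟩
  rcases hr.cases_head with hc | ⟨d, hd, _⟩
  · subst hc; exact hb
  · exact mem_Pred.2 ⟨h.arc_fst hd, hr.trans hbx⟩

/-- erase to a larger set: reachability monotone -/
lemma Reach.of_erase_superset {G : Pos α} {S T : Finset α} (hST : G.V \ S ⊆ G.V \ T)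
    {a b : α} (hr : (G.erase S).Reach a b) : (G.erase T).Reach a b := by
  induction hr with
  | refl => exact Relation.ReflTransGen.refl
  | tail _ harc ih =>
      refine ih.tail ?_
      rw [erase_A, Finset.mem_filter] at harc ⊢
      exact ⟨harc.1, hST harc.2.1, hST harc.2.2⟩

lemma Reach.of_erase {G : Pos α} {S : Finset α} {a b : α} (hr : (G.erase S).Reach a b) :
    G.Reach a b := by
  induction hr with
  | refl => exact Relation.ReflTransGen.refl
  | tail _ harc ih =>
      refine ih.tail ?_
      rw [erase_A, Finset.mem_filter] at harc
      exact harc.1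

lemma ext' {G G' : Pos α} (h1 : G.V = G'.V) (h2 : G.A = G'.A)
    (h3 : G.left = G'.left) : G = G' := by
  cases G; cases G'; simp_all

lemma erase_erase (G : Pos α) (S T : Finset α) :
    (G.erase S).erase T = G.erase (S ∪ T) := by
  refine ext' ?_ ?_ ?_
  · ext a; simp only [erase_V, Finset.mem_sdiff, Finset.mem_union]; tauto
  · ext p
    simp only [erase_A, erase_V, Finset.filter_filter, Finset.mem_filter,
      Finset.mem_sdiff, Finset.mem_union]
    tauto
  · ext a; simp only [erase_left, Finset.mem_sdiff, Finset.mem_union]; tauto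

lemma erase_congr {G : Pos α} (hwf : G.WF) {S T : Finset α} (h : G.V \ S = G.V \ T) :
    G.erase S = G.erase T := by
  have key : ∀ a, a ∈ G.V → (a ∉ S ↔ a ∉ T) := by
    intro a ha
    have := Finset.ext_iff.1 h a
    simp only [Finset.mem_sdiff] at this
    tauto
  refine ext' ?_ ?_ ?_
  · rw [erase_V, erase_V, h]
  · ext p
    simp only [erase_A, Finset.mem_filter, Finset.mem_sdiff]
    constructor <;> rintro ⟨hp, ⟨h1, h2⟩, h3, h4⟩ <;>
      exact ⟨hp, ⟨h1, by have := key _ h1; tauto⟩, h3, by have := key _ h3; tauto⟩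
  · ext a
    simp only [erase_left, Finset.mem_sdiff]
    constructor <;> rintro ⟨h1, h2⟩ <;>
      exact ⟨h1, by have := key a (hwf.left_sub h1); tauto⟩

end Pos
end Influence
namespace Influence
namespace Pos

variable {α : Type} [DecidableEq α]

/-- Any path either survives in the erased graph or passes through the erased set. -/
lemma reach_cases {G : Pos α} (S : Finset α) (hwf : G.WF) {z b : α} (hr : G.Reach z b) :
    (G.erase S).Reach z b ∨ ∃ w ∈ S, G.Reach z w ∧ G.Reach w b := by
  induction hr using Relation.ReflTransGen.head_induction_on with
  | refl => exact Or.inl Relation.ReflTransGen.refl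
  | head harc hrest ih =>
      rename_i a c
      by_cases haS : a ∈ S
      · exact Or.inr ⟨a, haS, Relation.ReflTransGen.refl,
          Relation.ReflTransGen.head harc hrest⟩
      by_cases hcS : c ∈ S
      · exact Or.inr ⟨c, hcS, Relation.ReflTransGen.single harc, hrest⟩
      rcases ih with ih | ⟨w, hwS, hcw, hwb⟩
      · refine Or.inl (Relation.ReflTransGen.head ?_ ih)
        rw [erase_A, Finset.mem_filter]
        exact ⟨harc, by simp [Finset.mem_sdiff, hwf.arc_fst harc, haS],
          by simp [Finset.mem_sdiff, hwf.arc_snd harc, hcS]⟩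
      · exact Or.inr ⟨w, hwS, Relation.ReflTransGen.head harc hcw, hwb⟩

/-- If `S` is forward closed and `b ∉ S`, any path to `b` survives erasing `S`. -/
lemma reach_erase_of_fwdClosed {G : Pos α} {S : Finset α} (hwf : G.WF)
    (hS : ∀ u b, u ∈ S → G.Reach u b → b ∈ S) {z b : α} (hr : G.Reach z b)
    (hb : b ∉ S) : (G.erase S).Reach z b := by
  rcases reach_cases S hwf hr with h | ⟨w, hwS, _, hwb⟩
  · exact h
  · exact absurd (hS w b hwS hwb) hb

lemma ForcL_fwd {G : Pos α} {w b : α} (hw : w ∈ G.ForcL) (hb : b ∈ G.Succ w) :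
    b ∈ G.ForcL := by
  rcases mem_ForcL.1 hw with ⟨hwl, hws⟩
  exact mem_ForcL.2 ⟨hws hb, fun c hc => hws (Succ_trans hb hc)⟩

lemma ForcR_bwd {G : Pos α} {w b : α} (hw : w ∈ G.ForcR) (hb : b ∈ G.Pred w) :
    b ∈ G.ForcR := by
  rcases mem_ForcR.1 hw with ⟨hwl, hws⟩
  exact mem_ForcR.2 ⟨hws hb, fun c hc => hws (Pred_trans hb hc)⟩

lemma ForcL_erase_mono {G : Pos α} {S : Finset α} : G.ForcL \ S ⊆ (G.erase S).ForcL := by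
  intro v hv
  rcases Finset.mem_sdiff.1 hv with ⟨hvF, hvS⟩
  rcases mem_ForcL.1 hvF with ⟨hvl, hvs⟩
  refine mem_ForcL.2 ⟨by simp [erase_left, Finset.mem_sdiff, hvl, hvS], ?_⟩
  intro b hb
  rcases mem_Succ.1 hb with ⟨hbV, hbr⟩
  rw [erase_V, Finset.mem_sdiff] at hbV
  rw [erase_left, Finset.mem_sdiff]
  exact ⟨hvs (mem_Succ.2 ⟨hbV.1, hbr.of_erase⟩), hbV.2⟩

lemma ForcR_erase_mono {G : Pos α} {S : Finset α} : G.ForcR \ S ⊆ (G.erase S).ForcR := by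
  intro v hv
  rcases Finset.mem_sdiff.1 hv with ⟨hvF, hvS⟩
  rcases mem_ForcR.1 hvF with ⟨hvl, hvs⟩
  refine mem_ForcR.2 ⟨by rw [erase_R, Finset.mem_sdiff]; exact ⟨hvl, hvS⟩, ?_⟩
  intro b hb
  rcases mem_Pred.1 hb with ⟨hbV, hbr⟩
  rw [erase_V, Finset.mem_sdiff] at hbV
  rw [erase_R, Finset.mem_sdiff]
  exact ⟨hvs (mem_Pred.2 ⟨hbV.1, hbr.of_erase⟩), hbV.2⟩

lemma Forc_erase_mono {G : Pos α} {S : Finset α} : G.Forc \ S ⊆ (G.erase S).Forc := by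
  intro v hv
  rcases Finset.mem_sdiff.1 hv with ⟨hvF, hvS⟩
  rcases Finset.mem_union.1 hvF with h | h
  · exact Finset.mem_union_left _ (ForcL_erase_mono (Finset.mem_sdiff.2 ⟨h, hvS⟩))
  · exact Finset.mem_union_right _ (ForcR_erase_mono (Finset.mem_sdiff.2 ⟨h, hvS⟩))

/-- Removing the forced vertices yields a relevant position. -/
lemma Forc_erase_Forc {G : Pos α} (hwf : G.WF) : (G.erase G.Forc).Forc = ∅ := by
  set J := G.erase G.Forc with hJ
  have hJwf : J.WF := hwf.erase _
  rw [Finset.eq_empty_iff_forall_notMem]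
  intro v hv
  rcases Finset.mem_union.1 hv with hv | hv
  · -- v ∈ ForcL J : show v ∈ ForcL G, contradiction with v ∉ Forc
    rcases mem_ForcL.1 hv with ⟨hvl, hvs⟩
    rw [erase_left, Finset.mem_sdiff] at hvl
    have hvV : v ∈ G.V := hwf.left_sub hvl.1
    have : v ∈ G.ForcL := by
      refine mem_ForcL.2 ⟨hvl.1, ?_⟩
      intro b hb
      rcases mem_Succ.1 hb with ⟨hbV, hbr⟩
      rcases reach_cases G.Forc hwf hbr with h | ⟨w, hwF, hvw, hwb⟩
      · have hbJ : b ∈ J.V := h.mem_V hJwf (by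
          rw [hJ, erase_V, Finset.mem_sdiff]; exact ⟨hvV, hvl.2⟩)
        have := hvs (mem_Succ.2 ⟨hbJ, h⟩)
        rw [hJ, erase_left, Finset.mem_sdiff] at this
        exact this.1
      · rcases Finset.mem_union.1 hwF with hw | hw
        · have hbw : b ∈ G.Succ w := mem_Succ.2 ⟨hbV, hwb⟩
          exact ForcL_subset_left (ForcL_fwd hw hbw)
        · have : v ∈ G.ForcR := ForcR_bwd hw (mem_Pred.2 ⟨hvV, hvw⟩)
          exact absurd (Finset.mem_union_right _ this) hvl.2
    exact hvl.2 (Finset.mem_union_left _ this)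
  · rcases mem_ForcR.1 hv with ⟨hvl, hvs⟩
    rw [erase_R, Finset.mem_sdiff] at hvl
    have hvV : v ∈ G.V := hwf.R_sub hvl.1
    have : v ∈ G.ForcR := by
      refine mem_ForcR.2 ⟨hvl.1, ?_⟩
      intro b hb
      rcases mem_Pred.1 hb with ⟨hbV, hbr⟩
      rcases reach_cases G.Forc hwf hbr with h | ⟨w, hwF, hbw, hwv⟩
      · have hbJ : b ∈ J.V := by
          rw [hJ, erase_V, Finset.mem_sdiff]
          refine ⟨hbV, fun hbF => ?_⟩
          rcases Finset.mem_union.1 hbF with hw | hw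
          · -- b ∈ ForcL G, and v ∈ Succ G b, so v ∈ ForcL G, contra
            have : v ∈ G.ForcL := ForcL_fwd hw (mem_Succ.2 ⟨hvV, hbr⟩)
            exact hvl.2 (Finset.mem_union_left _ this)
          · -- b ∈ ForcR G: fine, but then the erased path can't start at b...
            -- b ∈ Forc so b ∉ J.V, yet h : Reach J b v ... b may equal v? v ∉ Forc
            rcases h.cases_head with hc | ⟨d, hd, _⟩
            · exact hvl.2 (hc ▸ hbF)
            · have : b ∈ J.V := hJwf.arc_fst hd
              rw [hJ, erase_V, Finset.mem_sdiff] at this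
              exact this.2 hbF
        have := hvs (mem_Pred.2 ⟨hbJ, h⟩)
        rw [hJ, erase_R, Finset.mem_sdiff] at this
        exact this.1
      · rcases Finset.mem_union.1 hwF with hw | hw
        · have : v ∈ G.ForcL := ForcL_fwd hw (mem_Succ.2 ⟨hvV, hwv⟩)
          exact absurd (Finset.mem_union_left _ this) hvl.2
        · exact ForcR_subset_R (ForcR_bwd hw (mem_Pred.2 ⟨hbV, hbw⟩))
    exact hvl.2 (Finset.mem_union_right _ this)

lemma Rmv_left_def {G : Pos α} {x : α} (hx : x ∈ G.left) :
    G.Rmv x = G.Succ x ∪ (G.erase (G.Succ x)).Forc := if_pos hx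

lemma Rmv_right_def {G : Pos α} {x : α} (hx : x ∉ G.left) :
    G.Rmv x = G.Pred x ∪ (G.erase (G.Pred x)).Forc := if_neg hx

lemma Rmv_spec (G : Pos α) (x : α) :
    ∃ B : Finset α, (B = G.Succ x ∨ B = G.Pred x) ∧ G.Rmv x = B ∪ (G.erase B).Forc := by
  by_cases hx : x ∈ G.left
  · exact ⟨G.Succ x, Or.inl rfl, Rmv_left_def hx⟩
  · exact ⟨G.Pred x, Or.inr rfl, Rmv_right_def hx⟩

lemma Rmv_subset_V {G : Pos α} (hwf : G.WF) (x : α) : G.Rmv x ⊆ G.V := by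
  rcases Rmv_spec G x with ⟨B, hB, hR⟩
  rw [hR]
  have hBV : B ⊆ G.V := by rcases hB with h | h <;> subst h
    <;> [exact Succ_subset_V; exact Pred_subset_V]
  refine Finset.union_subset hBV ?_
  intro a ha
  have := Forc_subset_V (hwf.erase B) ha
  rw [erase_V] at this
  exact (Finset.mem_sdiff.1 this).1

lemma mem_Rmv_self {G : Pos α} {x : α} (hx : x ∈ G.V) : x ∈ G.Rmv x := by
  rcases Rmv_spec G x with ⟨B, hB, hR⟩
  rw [hR]
  refine Finset.mem_union_left _ ?_
  rcases hB with h | h <;> subst h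
  · exact self_mem_Succ hx
  · exact self_mem_Pred hx

lemma move_V (G : Pos α) (x : α) : (G.move x).V = G.V \ G.Rmv x := rfl

lemma WF.move {G : Pos α} (hwf : G.WF) (x : α) : (G.move x).WF := hwf.erase _

/-- The result of a move is relevant. -/
lemma move_relevant {G : Pos α} (hwf : G.WF) (x : α) : (G.move x).Relevant := by
  rcases Rmv_spec G x with ⟨B, _, hR⟩
  show (G.erase (G.Rmv x)).Forc = ∅
  rw [hR, ← erase_erase]
  exact Forc_erase_Forc (hwf.erase B)

lemma Relevant.forcL {G : Pos α} (h : G.Relevant) : G.ForcL = ∅ :=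
  (Finset.union_eq_empty.1 h).1

lemma Relevant.forcR {G : Pos α} (h : G.Relevant) : G.ForcR = ∅ :=
  (Finset.union_eq_empty.1 h).2

/-- For a relevant position the part of `Rmv` beyond `Succ` consists of Left-forced
vertices only. -/
lemma ForcR_erase_Succ {G : Pos α} (hwf : G.WF) (hrel : G.Relevant) (x : α) :
    (G.erase (G.Succ x)).ForcR = ∅ := by
  rw [Finset.eq_empty_iff_forall_notMem]
  intro v hv
  rcases mem_ForcR.1 hv with ⟨hvR, hvs⟩
  rw [erase_R, Finset.mem_sdiff] at hvR
  have hvV : v ∈ G.V := hwf.R_sub hvR.1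
  have hvS : v ∉ G.Succ x := hvR.2
  have : v ∈ G.ForcR := by
    refine mem_ForcR.2 ⟨hvR.1, ?_⟩
    intro z hz
    rcases mem_Pred.1 hz with ⟨hzV, hzr⟩
    have hzS : z ∉ G.Succ x := fun h => hvS (mem_Succ_of_reach hwf h hzr)
    have := reach_erase_of_fwdClosed hwf
      (fun u b hu hb => mem_Succ_of_reach hwf hu hb) hzr hvS
    have hzP : z ∈ (G.erase (G.Succ x)).Pred v :=
      mem_Pred.2 ⟨by rw [erase_V, Finset.mem_sdiff]; exact ⟨hzV, hzS⟩, this⟩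
    have := hvs hzP
    rw [erase_R, Finset.mem_sdiff] at this
    exact this.1
  rw [hrel.forcR] at this
  exact absurd this (Finset.notMem_empty v)

lemma ForcL_erase_Pred {G : Pos α} (hwf : G.WF) (hrel : G.Relevant) (y : α) :
    (G.erase (G.Pred y)).ForcL = ∅ := by
  rw [Finset.eq_empty_iff_forall_notMem]
  intro v hv
  rcases mem_ForcL.1 hv with ⟨hvL, hvs⟩
  rw [erase_left, Finset.mem_sdiff] at hvL
  have hvV : v ∈ G.V := hwf.left_sub hvL.1
  have hvP : v ∉ G.Pred y := hvL.2
  have : v ∈ G.ForcL := by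
    refine mem_ForcL.2 ⟨hvL.1, ?_⟩
    intro z hz
    rcases mem_Succ.1 hz with ⟨hzV, hzr⟩
    have hzP : z ∉ G.Pred y := fun h => hvP (mem_Pred_of_reach hwf h hzr)
    have hrr := reach_cases (G.Pred y) hwf hzr
    rcases hrr with h | ⟨w, hwP, hvw, hwz⟩
    · have hzV' : z ∈ (G.erase (G.Pred y)).V := by
        rw [erase_V, Finset.mem_sdiff]; exact ⟨hzV, hzP⟩
      have := hvs (mem_Succ.2 ⟨hzV', h⟩)
      rw [erase_left, Finset.mem_sdiff] at this
      exact this.1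
    · exact absurd (mem_Pred_of_reach hwf hwP hvw) hvP
  rw [hrel.forcL] at this
  exact absurd this (Finset.notMem_empty v)

lemma Rmv_eq_left {G : Pos α} (hwf : G.WF) (hrel : G.Relevant) {x : α}
    (hx : x ∈ G.left) : G.Rmv x = G.Succ x ∪ (G.erase (G.Succ x)).ForcL := by
  rw [Rmv_left_def hx]
  unfold Forc
  rw [ForcR_erase_Succ hwf hrel, Finset.union_empty]

lemma Rmv_eq_right {G : Pos α} (hwf : G.WF) (hrel : G.Relevant) {y : α}
    (hy : y ∉ G.left) : G.Rmv y = G.Pred y ∪ (G.erase (G.Pred y)).ForcL ∪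
      (G.erase (G.Pred y)).ForcR := by
  rw [Rmv_right_def hy]
  unfold Forc
  rw [Finset.union_assoc]

lemma Rmv_eq_right' {G : Pos α} (hwf : G.WF) (hrel : G.Relevant) {y : α}
    (hy : y ∉ G.left) : G.Rmv y = G.Pred y ∪ (G.erase (G.Pred y)).ForcR := by
  rw [Rmv_right_def hy]
  unfold Forc
  rw [ForcL_erase_Pred hwf hrel, Finset.empty_union]

/-- The removed set of a Left move is forward closed. -/
lemma Rmv_fwdClosed {G : Pos α} (hwf : G.WF) (hrel : G.Relevant) {x : α}
    (hx : x ∈ G.left) : ∀ u b, u ∈ G.Rmv x → G.Reach u b → b ∈ G.Rmv x := by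
  intro u b hu hr
  rw [Rmv_eq_left hwf hrel hx] at hu ⊢
  rcases Finset.mem_union.1 hu with hu | hu
  · exact Finset.mem_union_left _ (mem_Succ_of_reach hwf hu hr)
  · rcases reach_cases (G.Succ x) hwf hr with h | ⟨w, hwS, _, hwb⟩
    · have huV : u ∈ (G.erase (G.Succ x)).V :=
        (hwf.erase _).left_sub (ForcL_subset_left hu)
      have hbV : b ∈ (G.erase (G.Succ x)).V := h.mem_V (hwf.erase _) huV
      exact Finset.mem_union_right _ (ForcL_fwd hu (mem_Succ.2 ⟨hbV, h⟩))
    · exact Finset.mem_union_left _ (mem_Succ_of_reach hwf hwS hwb)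

/-- The removed set of a Right move is backward closed. -/
lemma Rmv_bwdClosed {G : Pos α} (hwf : G.WF) (hrel : G.Relevant) {y : α}
    (hy : y ∉ G.left) : ∀ u b, u ∈ G.Rmv y → G.Reach b u → b ∈ G.Rmv y := by
  intro u b hu hr
  rw [Rmv_eq_right' hwf hrel hy] at hu ⊢
  rcases Finset.mem_union.1 hu with hu | hu
  · exact Finset.mem_union_left _ (mem_Pred_of_reach hwf hu hr)
  · rcases reach_cases (G.Pred y) hwf hr with h | ⟨w, hwS, hbw, hwu⟩
    · have huV : u ∈ (G.erase (G.Pred y)).V :=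
        (hwf.erase _).R_sub (ForcR_subset_R hu)
      have hbV : b ∈ (G.erase (G.Pred y)).V := by
        rcases h.cases_head with hc | ⟨d, hd, _⟩
        · exact hc ▸ huV
        · exact (hwf.erase _).arc_fst hd
      exact Finset.mem_union_right _ (ForcR_bwd hu (mem_Pred.2 ⟨hbV, h⟩))
    · exact Finset.mem_union_left _ (mem_Pred_of_reach hwf hwS hbw)

end Pos
end Influence
namespace Influence
namespace Pos

variable {α : Type} [DecidableEq α]

/-- Restriction of `Pred` after a Left move. -/
lemma Pred_move_left {G : Pos α} (hwf : G.WF) (hrel : G.Relevant) {x : α}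
    (hx : x ∈ G.left) {v : α} (hvn : v ∉ G.Rmv x) :
    (G.move x).Pred v = G.Pred v \ G.Rmv x := by
  ext z
  simp only [Finset.mem_sdiff, mem_Pred, move_V]
  constructor
  · rintro ⟨⟨hzV, hzR⟩, hr⟩
    exact ⟨⟨hzV, hr.of_erase⟩, hzR⟩
  · rintro ⟨⟨hzV, hr⟩, hzR⟩
    exact ⟨⟨hzV, hzR⟩,
      reach_erase_of_fwdClosed hwf (Rmv_fwdClosed hwf hrel hx) hr hvn⟩

/-- Restriction of `Succ` after a Left move. -/
lemma Succ_move_left {G : Pos α} (hwf : G.WF) (hrel : G.Relevant) {x : α}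
    (hx : x ∈ G.left) {v : α} (hvn : v ∉ G.Rmv x) :
    (G.move x).Succ v = G.Succ v \ G.Rmv x := by
  ext b
  simp only [Finset.mem_sdiff, mem_Succ, move_V]
  constructor
  · rintro ⟨⟨hbV, hbR⟩, hr⟩
    exact ⟨⟨hbV, hr.of_erase⟩, hbR⟩
  · rintro ⟨⟨hbV, hr⟩, hbR⟩
    exact ⟨⟨hbV, hbR⟩,
      reach_erase_of_fwdClosed hwf (Rmv_fwdClosed hwf hrel hx) hr hbR⟩

/-! ### The dualising (arc reversing, colour swapping) operation -/

/-- The dual position: reverse all arcs and swap the colours. -/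
def op (G : Pos α) : Pos α := ⟨G.V, G.A.image Prod.swap, G.R⟩

@[simp] lemma op_V (G : Pos α) : (op G).V = G.V := rfl
@[simp] lemma op_left (G : Pos α) : (op G).left = G.R := rfl

lemma mem_op_A {G : Pos α} {p : α × α} : p ∈ (op G).A ↔ (p.2, p.1) ∈ G.A := by
  constructor
  · intro h
    rcases Finset.mem_image.1 h with ⟨q, hq, hqp⟩
    subst hqp; simpa using hq
  · intro h
    exact Finset.mem_image.2 ⟨(p.2, p.1), h, rfl⟩

lemma op_R {G : Pos α} (hwf : G.WF) : (op G).R = G.left := by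
  show G.V \ (G.V \ G.left) = G.left
  ext a
  simp only [Finset.mem_sdiff, not_and, not_not]
  constructor
  · rintro ⟨h1, h2⟩; exact h2 h1
  · intro h; exact ⟨hwf.left_sub h, fun _ => h⟩

lemma WF.op {G : Pos α} (hwf : G.WF) : (Pos.op G).WF := by
  constructor
  · intro p hp
    have := mem_op_A.1 hp
    exact ⟨hwf.arc_snd this, hwf.arc_fst this⟩
  · exact hwf.R_sub

lemma op_reach {G : Pos α} {a b : α} : (op G).Reach a b ↔ G.Reach b a := by
  constructor
  · intro h
    induction h with
    | refl => exact Relation.ReflTransGen.refl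
    | tail _ harc ih => exact Relation.ReflTransGen.head (mem_op_A.1 harc) ih
  · intro h
    induction h with
    | refl => exact Relation.ReflTransGen.refl
    | tail _ harc ih =>
        exact Relation.ReflTransGen.head (mem_op_A.2 (by simpa using harc)) ih

lemma op_Succ (G : Pos α) (x : α) : (op G).Succ x = G.Pred x := by
  ext z; rw [mem_Succ, mem_Pred, op_V, op_reach]

lemma op_Pred (G : Pos α) (x : α) : (op G).Pred x = G.Succ x := by
  ext z; rw [mem_Pred, mem_Succ, op_V, op_reach]

lemma op_erase (G : Pos α) (S : Finset α) : op (G.erase S) = (op G).erase S := by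
  refine ext' rfl ?_ ?_
  · ext p
    simp only [mem_op_A, erase_A, Finset.mem_filter, mem_op_A]; simp only [op_V]
    constructor
    · rintro ⟨h1, h2, h3⟩; exact ⟨h1, h3, h2⟩
    · rintro ⟨h1, h2, h3⟩; exact ⟨h1, h3, h2⟩
  · show (G.erase S).R = G.R \ S
    exact erase_R G S

lemma op_ForcL (G : Pos α) : (op G).ForcL = G.ForcR := by
  ext x
  rw [mem_ForcL, mem_ForcR, op_left]
  constructor
  · rintro ⟨h1, h2⟩
    refine ⟨h1, fun z hz => ?_⟩
    have := h2 (by rw [op_Succ]; exact hz)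
    exact this
  · rintro ⟨h1, h2⟩
    refine ⟨h1, fun z hz => h2 (by rw [op_Succ] at hz; exact hz)⟩

lemma op_ForcR {G : Pos α} (hwf : G.WF) : (op G).ForcR = G.ForcL := by
  ext x
  rw [mem_ForcR, mem_ForcL, op_R hwf]
  constructor
  · rintro ⟨h1, h2⟩
    exact ⟨h1, fun z hz => h2 (by rw [op_Pred]; exact hz)⟩
  · rintro ⟨h1, h2⟩
    refine ⟨h1, fun z hz => ?_⟩
    rw [op_Pred] at hz
    exact h2 hz

lemma op_Forc {G : Pos α} (hwf : G.WF) : (op G).Forc = G.Forc := by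
  unfold Forc
  rw [op_ForcL, op_ForcR hwf, Finset.union_comm]

lemma Relevant.op {G : Pos α} (hwf : G.WF) (h : G.Relevant) : (Pos.op G).Relevant := by
  unfold Relevant
  rw [op_Forc hwf]; exact h

lemma op_Rmv {G : Pos α} (hwf : G.WF) {x : α} (hx : x ∈ G.V) :
    (op G).Rmv x = G.Rmv x := by
  by_cases hxl : x ∈ G.left
  · have hxl' : x ∉ (op G).left := by
      rw [op_left, mem_R]; tauto
    rw [Rmv_right_def hxl', Rmv_left_def hxl, op_Pred, ← op_erase,
      op_Forc (hwf.erase _)]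
  · have hxl' : x ∈ (op G).left := by rw [op_left, mem_R]; exact ⟨hx, hxl⟩
    rw [Rmv_left_def hxl', Rmv_right_def hxl, op_Succ, ← op_erase,
      op_Forc (hwf.erase _)]

lemma op_move {G : Pos α} (hwf : G.WF) {x : α} (hx : x ∈ G.V) :
    (op G).move x = op (G.move x) := by
  unfold move
  rw [op_Rmv hwf hx, op_erase]

/-- Duals of the D-lemmas, after a Right move. -/
lemma Succ_move_right {G : Pos α} (hwf : G.WF) (hrel : G.Relevant) {y : α}
    (hy : y ∈ G.R) {v : α} (hvn : v ∉ G.Rmv y) :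
    (G.move y).Succ v = G.Succ v \ G.Rmv y := by
  have hyV : y ∈ G.V := hwf.R_sub hy
  have h1 : (op (G.move y)).Pred v = (op G).Pred v \ (op G).Rmv y := by
    rw [← op_move hwf hyV]
    exact Pred_move_left hwf.op (hrel.op hwf) (by rw [op_left]; exact hy)
      (by rwa [op_Rmv hwf hyV])
  rw [op_Pred, op_Pred, op_Rmv hwf hyV] at h1
  exact h1

lemma Pred_move_right {G : Pos α} (hwf : G.WF) (hrel : G.Relevant) {y : α}
    (hy : y ∈ G.R) {v : α} (hvn : v ∉ G.Rmv y) :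
    (G.move y).Pred v = G.Pred v \ G.Rmv y := by
  have hyV : y ∈ G.V := hwf.R_sub hy
  have h1 : (op (G.move y)).Succ v = (op G).Succ v \ (op G).Rmv y := by
    rw [← op_move hwf hyV]
    exact Succ_move_left hwf.op (hrel.op hwf) (by rw [op_left]; exact hy)
      (by rwa [op_Rmv hwf hyV])
  rw [op_Succ, op_Succ, op_Rmv hwf hyV] at h1
  exact h1

end Pos
end Influence
namespace Influence
namespace Pos

variable {α : Type} [DecidableEq α]

lemma sdiff_mono_erase {V S T : Finset α} (h : T ⊆ S) : V \ S ⊆ V \ T :=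
  Finset.sdiff_subset_sdiff le_rfl h

/-- Closedness: a Left vertex inside a Left removal has its removal inside. -/
lemma Rmv_mono_left {G : Pos α} (hwf : G.WF) (hrel : G.Relevant) {x z : α}
    (hx : x ∈ G.left) (hz : z ∈ G.left) (hzR : z ∈ G.Rmv x) :
    G.Rmv z ⊆ G.Rmv x := by
  have hzV : z ∈ G.V := hwf.left_sub hz
  rw [Rmv_eq_left hwf hrel hx] at hzR ⊢
  rw [Rmv_eq_left hwf hrel hz]
  set J := G.erase (G.Succ x) with hJdef
  have hJwf : J.WF := hwf.erase _
  rcases Finset.mem_union.1 hzR with hzx | hzF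
  · -- z ∈ Succ x
    have hSzx : G.Succ z ⊆ G.Succ x := fun c hc => Succ_trans hzx hc
    intro b hb
    rcases Finset.mem_union.1 hb with hb | hb
    · exact Finset.mem_union_left _ (hSzx hb)
    · by_cases hbSx : b ∈ G.Succ x
      · exact Finset.mem_union_left _ hbSx
      rcases mem_ForcL.1 hb with ⟨hbl, hbs⟩
      rw [erase_left, Finset.mem_sdiff] at hbl
      refine Finset.mem_union_right _ (mem_ForcL.2 ⟨?_, ?_⟩)
      · rw [erase_left, Finset.mem_sdiff]; exact ⟨hbl.1, hbSx⟩
      · intro c hc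
        rcases mem_Succ.1 hc with ⟨hcV, hcr⟩
        rw [hJdef, erase_V, Finset.mem_sdiff] at hcV
        have hcSz : c ∉ G.Succ z := fun h => hcV.2 (hSzx h)
        have hcr' : (G.erase (G.Succ z)).Reach b c :=
          hcr.of_erase_superset (sdiff_mono_erase hSzx)
        have := hbs (mem_Succ.2 ⟨by
          rw [erase_V, Finset.mem_sdiff]; exact ⟨hcV.1, hcSz⟩, hcr'⟩)
        rw [erase_left, Finset.mem_sdiff] at this
        rw [erase_left, Finset.mem_sdiff]
        exact ⟨this.1, hcV.2⟩
  · -- z ∈ ForcL J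
    have hzJV : z ∈ J.V := hJwf.left_sub (ForcL_subset_left hzF)
    have hSz : ∀ b, b ∈ G.Succ z → b ∈ G.Succ x ∪ J.ForcL := by
      intro b hb
      rcases mem_Succ.1 hb with ⟨hbV, hbr⟩
      rcases reach_cases (G.Succ x) hwf hbr with h | ⟨w, hwS, _, hwb⟩
      · exact Finset.mem_union_right _
          (ForcL_fwd hzF (mem_Succ.2 ⟨h.mem_V hJwf hzJV, h⟩))
      · exact Finset.mem_union_left _ (mem_Succ_of_reach hwf hwS hwb)
    intro b hb
    rcases Finset.mem_union.1 hb with hb | hb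
    · exact hSz b hb
    · by_cases hbSx : b ∈ G.Succ x
      · exact Finset.mem_union_left _ hbSx
      rcases mem_ForcL.1 hb with ⟨hbl, hbs⟩
      rw [erase_left, Finset.mem_sdiff] at hbl
      have hbJV : b ∈ J.V := by
        rw [hJdef, erase_V, Finset.mem_sdiff]
        exact ⟨hwf.left_sub hbl.1, hbSx⟩
      refine Finset.mem_union_right _ (mem_ForcL.2 ⟨?_, ?_⟩)
      · rw [erase_left, Finset.mem_sdiff]; exact ⟨hbl.1, hbSx⟩
      · intro c hc
        rcases mem_Succ.1 hc with ⟨hcV, hcr⟩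
        rw [erase_left, Finset.mem_sdiff]
        rw [hJdef, erase_V, Finset.mem_sdiff] at hcV
        refine ⟨?_, hcV.2⟩
        rcases reach_cases (G.Succ z) hJwf hcr with h | ⟨w, hwSz, hbw, hwc⟩
        · have hbJV' : b ∈ (J.erase (G.Succ z)).V := by
            rw [erase_V, Finset.mem_sdiff]
            exact ⟨hbJV, hbl.2⟩
          have hcJV' : c ∈ (J.erase (G.Succ z)).V := h.mem_V (hJwf.erase _) hbJV'
          rw [erase_V, Finset.mem_sdiff] at hcJV'
          have hreach : (G.erase (G.Succ z)).Reach b c := by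
            rw [hJdef, erase_erase] at h
            exact h.of_erase_superset
              (sdiff_mono_erase Finset.subset_union_right)
          have := hbs (mem_Succ.2 ⟨by
            rw [erase_V, Finset.mem_sdiff]; exact ⟨hcV.1, hcJV'.2⟩, hreach⟩)
          rw [erase_left, Finset.mem_sdiff] at this
          exact this.1
        · have hwJV : w ∈ J.V := hbw.mem_V hJwf hbJV
          have hwJ : w ∈ J.Succ z := by
            refine mem_Succ.2 ⟨hwJV, ?_⟩
            rcases mem_Succ.1 hwSz with ⟨hwV, hzw⟩
            rcases reach_cases (G.Succ x) hwf hzw with h2 | ⟨u, huS, _, huw⟩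
            · exact h2
            · exfalso
              rw [hJdef, erase_V, Finset.mem_sdiff] at hwJV
              exact hwJV.2 (mem_Succ_of_reach hwf huS huw)
          have hwF : w ∈ J.ForcL := ForcL_fwd hzF hwJ
          have : c ∈ J.ForcL := ForcL_fwd hwF (mem_Succ.2 ⟨by
            rw [hJdef, erase_V, Finset.mem_sdiff]; exact ⟨hcV.1, hcV.2⟩, hwc⟩)
          rw [hJdef] at this
          have := ForcL_subset_left this
          rw [erase_left, Finset.mem_sdiff] at this
          exact this.1

/-- Cross-colour commutation: after a Left move, the removal of a surviving Right
move is the old removal minus the Left removal. -/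
lemma Rmv_move_cross {G : Pos α} (hwf : G.WF) (hrel : G.Relevant) {x y : α}
    (hx : x ∈ G.left) (hy : y ∈ G.R) (hyx : y ∉ G.Rmv x) (hxy : x ∉ G.Rmv y) :
    (G.move x).Rmv y = G.Rmv y \ G.Rmv x := by
  have hyV : y ∈ G.V := hwf.R_sub hy
  have hynl : y ∉ G.left := (mem_R.1 hy).2
  have hynl' : y ∉ (G.move x).left := by
    rw [move, erase_left, Finset.mem_sdiff]; tauto
  have hmwf : (G.move x).WF := hwf.move x
  have hmrel : (G.move x).Relevant := move_relevant hwf x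
  rw [Rmv_eq_right' hmwf hmrel hynl']
  rw [Rmv_eq_right' hwf hrel hynl]
  have hP : (G.move x).Pred y = G.Pred y \ G.Rmv x :=
    Pred_move_left hwf hrel hx hyx
  rw [hP]
  have hgr : (G.move x).erase (G.Pred y \ G.Rmv x) =
      G.erase (G.Rmv x ∪ G.Pred y) := by
    rw [move, erase_erase]
    congr 1
    rw [Finset.union_sdiff_self_eq_union]
  rw [hgr]
  rw [Finset.union_sdiff_distrib]
  congr 1
  -- ForcR (G.erase (Rmv x ∪ Pred y)) = ForcR (G.erase (Pred y)) \ Rmv x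
  set J := G.erase (G.Pred y) with hJdef
  have hJwf : J.WF := hwf.erase _
  apply Finset.Subset.antisymm
  · intro v hv
    rcases mem_ForcR.1 hv with ⟨hvR, hvs⟩
    rw [erase_R, Finset.mem_sdiff, Finset.mem_union] at hvR
    refine Finset.mem_sdiff.2 ⟨mem_ForcR.2 ⟨?_, ?_⟩, fun h => hvR.2 (Or.inl h)⟩
    · rw [hJdef, erase_R, Finset.mem_sdiff]
      exact ⟨hvR.1, fun h => hvR.2 (Or.inr h)⟩
    · intro z hz
      rcases mem_Pred.1 hz with ⟨hzV, hzr⟩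
      rw [hJdef, erase_V, Finset.mem_sdiff] at hzV
      have hzRx : z ∉ G.Rmv x := by
        intro h
        exact hvR.2 (Or.inl (Rmv_fwdClosed hwf hrel hx z v h hzr.of_erase))
      have hclosed : ∀ u b, u ∈ G.Rmv x → J.Reach u b → b ∈ G.Rmv x := by
        intro u b hu hb
        exact Rmv_fwdClosed hwf hrel hx u b hu hb.of_erase
      have hreach : (J.erase (G.Rmv x)).Reach z v :=
        reach_erase_of_fwdClosed hJwf hclosed hzr (fun h => hvR.2 (Or.inl h))
      have hzP : z ∈ (J.erase (G.Rmv x)).Pred v := by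
        refine mem_Pred.2 ⟨?_, hreach⟩
        rw [erase_V, Finset.mem_sdiff]
        refine ⟨?_, hzRx⟩
        rw [hJdef, erase_V, Finset.mem_sdiff]
        exact ⟨hzV.1, hzV.2⟩
      have hJJ : J.erase (G.Rmv x) = G.erase (G.Rmv x ∪ G.Pred y) := by
        rw [hJdef, erase_erase, Finset.union_comm]
      rw [hJJ] at hzP
      have := hvs hzP
      rw [erase_R, Finset.mem_sdiff] at this
      rw [hJdef, erase_R, Finset.mem_sdiff]
      refine ⟨this.1, fun h => ?_⟩
      exact this.2 (Finset.mem_union.2 (Or.inr h))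
  · intro v hv
    rcases Finset.mem_sdiff.1 hv with ⟨hvF, hvRx⟩
    have hJJ : G.erase (G.Rmv x ∪ G.Pred y) = J.erase (G.Rmv x) := by
      rw [hJdef, erase_erase, Finset.union_comm]
    rw [hJJ]
    exact ForcR_erase_mono (Finset.mem_sdiff.2 ⟨hvF, hvRx⟩)

/-- Result of the cross-colour exchange on positions. -/
lemma move_move_cross {G : Pos α} (hwf : G.WF) (hrel : G.Relevant) {x y : α}
    (hx : x ∈ G.left) (hy : y ∈ G.R) (hyx : y ∉ G.Rmv x) (hxy : x ∉ G.Rmv y) :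
    (G.move x).move y = G.erase (G.Rmv x ∪ G.Rmv y) := by
  show (G.move x).erase ((G.move x).Rmv y) = _
  rw [Rmv_move_cross hwf hrel hx hy hyx hxy, move, erase_erase,
    Finset.union_sdiff_self_eq_union]

end Pos
end Influence
namespace Influence
namespace Pos

variable {α : Type} [DecidableEq α]

lemma move_move (G : Pos α) (a b : α) :
    (G.move a).move b = G.erase (G.Rmv a ∪ (G.move a).Rmv b) := erase_erase _ _ _

set_option maxHeartbeats 1000000 in
/-- Joint description of the removal of two successive Left moves. -/
lemma joint_left {G : Pos α} (hwf : G.WF) (hrel : G.Relevant) {x x' : α}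
    (hx : x ∈ G.left) (hx' : x' ∈ G.left) (hsurv : x' ∉ G.Rmv x) :
    G.Rmv x ∪ (G.move x).Rmv x' =
      G.Succ x ∪ G.Succ x' ∪ (G.erase (G.Succ x ∪ G.Succ x')).ForcL := by
  have hx'm : x' ∈ (G.move x).left := by
    rw [move, erase_left, Finset.mem_sdiff]; exact ⟨hx', hsurv⟩
  have hmwf : (G.move x).WF := hwf.move x
  have hmrel : (G.move x).Relevant := move_relevant hwf x
  have hS' : (G.move x).Succ x' = G.Succ x' \ G.Rmv x :=
    Succ_move_left hwf hrel hx hsurv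
  have hRx : G.Rmv x = G.Succ x ∪ (G.erase (G.Succ x)).ForcL :=
    Rmv_eq_left hwf hrel hx
  have hgr : (G.move x).erase (G.Succ x' \ G.Rmv x) =
      G.erase (G.Rmv x ∪ G.Succ x') := by
    rw [move, erase_erase]
    congr 1
    rw [Finset.union_sdiff_self_eq_union]
  have hRx' : (G.move x).Rmv x' =
      (G.Succ x' \ G.Rmv x) ∪ (G.erase (G.Rmv x ∪ G.Succ x')).ForcL := by
    rw [Rmv_eq_left hmwf hmrel hx'm, hS', hgr]
  set F : Finset α := (G.erase (G.Succ x)).ForcL with hF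
  set P : Finset α := (G.erase (G.Rmv x ∪ G.Succ x')).ForcL with hP
  have hJwf : (G.erase (G.Succ x ∪ G.Succ x')).WF := hwf.erase _
  -- K1 : F \ Succ x' ⊆ Q
  have hK1 : ∀ a, a ∈ F → a ∉ G.Succ x' →
      a ∈ (G.erase (G.Succ x ∪ G.Succ x')).ForcL := by
    intro a ha ha'
    have := ForcL_erase_mono (S := G.Succ x')
      (Finset.mem_sdiff.2 ⟨ha, ha'⟩)
    rw [erase_erase] at this
    exact this
  -- fwd-closedness of F within J
  have hFfwd : ∀ u b, u ∈ F → (G.erase (G.Succ x ∪ G.Succ x')).Reach u b → b ∈ F := by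
    intro u b hu hb
    have hb' : (G.erase (G.Succ x)).Reach u b :=
      hb.of_erase_superset (sdiff_mono_erase Finset.subset_union_left)
    have huV : u ∈ (G.erase (G.Succ x)).V :=
      (hwf.erase _).left_sub (ForcL_subset_left hu)
    exact ForcL_fwd hu (mem_Succ.2 ⟨hb'.mem_V (hwf.erase _) huV, hb'⟩)
  -- K2 : P ⊆ Q
  have hK2 : ∀ a, a ∈ P → a ∈ (G.erase (G.Succ x ∪ G.Succ x')).ForcL := by
    intro v hv
    rcases mem_ForcL.1 hv with ⟨hvl, hvs⟩
    rw [erase_left, Finset.mem_sdiff, Finset.mem_union] at hvl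
    have hvnx : v ∉ G.Succ x := by
      intro h
      exact hvl.2 (Or.inl (by rw [hRx]; exact Finset.mem_union_left _ h))
    have hvnx' : v ∉ G.Succ x' := fun h => hvl.2 (Or.inr h)
    have hvnF : v ∉ F := by
      intro h
      exact hvl.2 (Or.inl (by rw [hRx]; exact Finset.mem_union_right _ h))
    refine mem_ForcL.2 ⟨?_, ?_⟩
    · rw [erase_left, Finset.mem_sdiff, Finset.mem_union]
      exact ⟨hvl.1, fun h => h.elim hvnx hvnx'⟩
    · intro b hb
      rcases mem_Succ.1 hb with ⟨hbV, hbr⟩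
      rw [erase_V, Finset.mem_sdiff, Finset.mem_union] at hbV
      rw [erase_left, Finset.mem_sdiff, Finset.mem_union]
      refine ⟨?_, fun h => h.elim (fun h1 => hbV.2 (Or.inl h1))
        (fun h1 => hbV.2 (Or.inr h1))⟩
      by_cases hbF : b ∈ F
      · have := ForcL_subset_left hbF
        rw [erase_left, Finset.mem_sdiff] at this
        exact this.1
      · have hre : ((G.erase (G.Succ x ∪ G.Succ x')).erase F).Reach v b :=
          reach_erase_of_fwdClosed hJwf hFfwd hbr hbF
        have hre2 : (G.erase (G.Rmv x ∪ G.Succ x')).Reach v b := by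
          rw [erase_erase] at hre
          refine hre.of_erase_superset ?_
          refine sdiff_mono_erase ?_
          intro a ha
          rcases Finset.mem_union.1 ha with ha | ha
          · rw [hRx] at ha
            rcases Finset.mem_union.1 ha with ha | ha
            · exact Finset.mem_union_left _ (Finset.mem_union_left _ ha)
            · exact Finset.mem_union_right _ ha
          · exact Finset.mem_union_left _ (Finset.mem_union_right _ ha)
        have hbV2 : b ∈ (G.erase (G.Rmv x ∪ G.Succ x')).V := by
          rw [erase_V, Finset.mem_sdiff, Finset.mem_union]
          refine ⟨hbV.1, fun h => ?_⟩
          rcases h with h | h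
          · rw [hRx] at h
            rcases Finset.mem_union.1 h with h | h
            · exact hbV.2 (Or.inl h)
            · exact hbF h
          · exact hbV.2 (Or.inr h)
        have := hvs (mem_Succ.2 ⟨hbV2, hre2⟩)
        rw [erase_left, Finset.mem_sdiff] at this
        exact this.1
  -- K3 : Q ⊆ F ∪ P
  have hK3 : ∀ a, a ∈ (G.erase (G.Succ x ∪ G.Succ x')).ForcL → a ∈ F ∨ a ∈ P := by
    intro v hv
    by_cases hvF : v ∈ F
    · exact Or.inl hvF
    rcases mem_ForcL.1 hv with ⟨hvl, hvs⟩
    rw [erase_left, Finset.mem_sdiff, Finset.mem_union] at hvl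
    refine Or.inr (mem_ForcL.2 ⟨?_, ?_⟩)
    · rw [erase_left, Finset.mem_sdiff, Finset.mem_union]
      refine ⟨hvl.1, fun h => ?_⟩
      rcases h with h | h
      · rw [hRx] at h
        rcases Finset.mem_union.1 h with h | h
        · exact hvl.2 (Or.inl h)
        · exact hvF h
      · exact hvl.2 (Or.inr h)
    · intro b hb
      rcases mem_Succ.1 hb with ⟨hbV, hbr⟩
      rw [erase_V, Finset.mem_sdiff, Finset.mem_union] at hbV
      have hbr2 : (G.erase (G.Succ x ∪ G.Succ x')).Reach v b := by
        refine hbr.of_erase_superset (sdiff_mono_erase ?_)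
        intro a ha
        rcases Finset.mem_union.1 ha with ha | ha
        · refine Finset.mem_union_left _ ?_
          rw [hRx]
          exact Finset.mem_union_left _ ha
        · exact Finset.mem_union_right _ ha
      have hbJV : b ∈ (G.erase (G.Succ x ∪ G.Succ x')).V := by
        rw [erase_V, Finset.mem_sdiff, Finset.mem_union]
        refine ⟨hbV.1, fun h => ?_⟩
        rcases h with h | h
        · refine hbV.2 (Or.inl ?_)
          rw [hRx]
          exact Finset.mem_union_left _ h
        · exact hbV.2 (Or.inr h)
      have := hvs (mem_Succ.2 ⟨hbJV, hbr2⟩)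
      rw [erase_left, Finset.mem_sdiff] at this
      rw [erase_left, Finset.mem_sdiff, Finset.mem_union]
      exact ⟨this.1, hbV.2⟩
  -- assemble
  rw [hRx', hRx]
  apply Finset.Subset.antisymm
  · intro a ha
    rcases Finset.mem_union.1 ha with ha | ha
    · rcases Finset.mem_union.1 ha with ha | ha
      · exact Finset.mem_union_left _ (Finset.mem_union_left _ ha)
      · by_cases h1 : a ∈ G.Succ x'
        · exact Finset.mem_union_left _ (Finset.mem_union_right _ h1)
        · exact Finset.mem_union_right _ (hK1 a ha h1)
    · rcases Finset.mem_union.1 ha with ha | ha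
      · exact Finset.mem_union_left _
          (Finset.mem_union_right _ (Finset.mem_sdiff.1 ha).1)
      · exact Finset.mem_union_right _ (hK2 a ha)
  · intro a ha
    rcases Finset.mem_union.1 ha with ha | ha
    · rcases Finset.mem_union.1 ha with ha | ha
      · exact Finset.mem_union_left _ (Finset.mem_union_left _ ha)
      · by_cases h2 : a ∈ G.Succ x
        · exact Finset.mem_union_left _ (Finset.mem_union_left _ h2)
        · by_cases h3 : a ∈ F
          · exact Finset.mem_union_left _ (Finset.mem_union_right _ h3)
          · refine Finset.mem_union_right _ (Finset.mem_union_left _ ?_)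
            refine Finset.mem_sdiff.2 ⟨ha, ?_⟩
            intro h
            rcases Finset.mem_union.1 h with h | h
            exacts [h2 h, h3 h]
    · rcases hK3 a ha with h | h
      · exact Finset.mem_union_left _ (Finset.mem_union_right _ h)
      · exact Finset.mem_union_right _ (Finset.mem_union_right _ h)

end Pos
end Influence
namespace Influence
namespace Pos

variable {α : Type} [DecidableEq α]

lemma Succ_subset_Rmv {G : Pos α} {x : α} (hx : x ∈ G.left) : G.Succ x ⊆ G.Rmv x := by
  rw [Rmv_left_def hx]; exact Finset.subset_union_left

lemma Pred_subset_Rmv {G : Pos α} {y : α} (hy : y ∉ G.left) : G.Pred y ⊆ G.Rmv y := by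
  rw [Rmv_right_def hy]; exact Finset.subset_union_left

/-- A surviving Right vertex was not removed by the Left move (automatic). -/
lemma right_survivor_sym {G : Pos α} (hwf : G.WF) (hrel : G.Relevant) {x y : α}
    (hx : x ∈ G.left) (hy : y ∈ G.R) (hxy : x ∉ G.Rmv y) : y ∉ G.Rmv x := by
  intro hmem
  rw [Rmv_eq_left hwf hrel hx] at hmem
  rcases Finset.mem_union.1 hmem with h | h
  · rcases mem_Succ.1 h with ⟨hyV, hr⟩
    have hxP : x ∈ G.Pred y := mem_Pred.2 ⟨hwf.left_sub hx, hr⟩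
    exact hxy (Pred_subset_Rmv (mem_R.1 hy).2 hxP)
  · have := ForcL_subset_left h
    rw [erase_left, Finset.mem_sdiff] at this
    exact (mem_R.1 hy).2 this.1

/-- Same colour exchange, absorbing case. -/
lemma se2_left {G : Pos α} (hwf : G.WF) (hrel : G.Relevant) {x x' : α}
    (hx : x ∈ G.left) (hx' : x' ∈ G.left) (hsurv : x' ∉ G.Rmv x)
    (hin : x ∈ G.Rmv x') :
    G.Rmv x ∪ (G.move x).Rmv x' = G.Rmv x' := by
  have hmono : G.Rmv x ⊆ G.Rmv x' := Rmv_mono_left hwf hrel hx' hx hin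
  rw [joint_left hwf hrel hx hx' hsurv]
  have hJ'wf : (G.erase (G.Succ x')).WF := hwf.erase _
  apply Finset.Subset.antisymm
  · intro a ha
    rcases Finset.mem_union.1 ha with ha | ha
    · rcases Finset.mem_union.1 ha with ha | ha
      · exact hmono (Succ_subset_Rmv hx ha)
      · exact Succ_subset_Rmv hx' ha
    · -- a ∈ ForcL (G ∖ (Sx ∪ Sx')) : show a ∈ ForcL (G ∖ Sx') ⊆ Rmv x'
      rcases mem_ForcL.1 ha with ⟨hal, has⟩
      rw [erase_left, Finset.mem_sdiff, Finset.mem_union] at hal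
      rw [Rmv_eq_left hwf hrel hx']
      refine Finset.mem_union_right _ (mem_ForcL.2 ⟨?_, ?_⟩)
      · rw [erase_left, Finset.mem_sdiff]
        exact ⟨hal.1, fun h => hal.2 (Or.inr h)⟩
      · intro b hb
        rcases mem_Succ.1 hb with ⟨hbV, hbr⟩
        rw [erase_V, Finset.mem_sdiff] at hbV
        rw [erase_left, Finset.mem_sdiff]
        refine ⟨?_, hbV.2⟩
        have haV' : a ∈ (G.erase (G.Succ x')).V := by
          rw [erase_V, Finset.mem_sdiff]
          exact ⟨hwf.left_sub hal.1, fun h => hal.2 (Or.inr h)⟩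
        rcases reach_cases (G.Succ x) hJ'wf hbr with h | ⟨w, hwS, haw, hwb⟩
        · rw [erase_erase, Finset.union_comm] at h
          have hbV2 : b ∈ (G.erase (G.Succ x ∪ G.Succ x')).V := by
            refine h.mem_V (hwf.erase _) ?_
            rw [erase_V, Finset.mem_sdiff, Finset.mem_union]
            exact ⟨hwf.left_sub hal.1, hal.2⟩
          have := has (mem_Succ.2 ⟨hbV2, h⟩)
          rw [erase_left, Finset.mem_sdiff] at this
          exact this.1
        · -- w ∈ Succ x ⊆ Rmv x' ; w survives Sx' so w ∈ ForcL (G∖Sx')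
          have hwV' : w ∈ (G.erase (G.Succ x')).V := haw.mem_V hJ'wf haV'
          have hwR : w ∈ G.Rmv x' := hmono (Succ_subset_Rmv hx hwS)
          rw [Rmv_eq_left hwf hrel hx'] at hwR
          have hwF : w ∈ (G.erase (G.Succ x')).ForcL := by
            rcases Finset.mem_union.1 hwR with h | h
            · exfalso
              rw [erase_V, Finset.mem_sdiff] at hwV'
              exact hwV'.2 h
            · exact h
          have : b ∈ (G.erase (G.Succ x')).ForcL :=
            ForcL_fwd hwF (mem_Succ.2 ⟨by
              rw [erase_V, Finset.mem_sdiff]; exact ⟨hbV.1, hbV.2⟩, hwb⟩)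
          have := ForcL_subset_left this
          rw [erase_left, Finset.mem_sdiff] at this
          exact this.1
  · rw [Rmv_eq_left hwf hrel hx']
    intro a ha
    rcases Finset.mem_union.1 ha with ha | ha
    · exact Finset.mem_union_left _ (Finset.mem_union_right _ ha)
    · by_cases haSx : a ∈ G.Succ x
      · exact Finset.mem_union_left _ (Finset.mem_union_left _ haSx)
      · refine Finset.mem_union_right _ ?_
        have := ForcL_erase_mono (S := G.Succ x) (Finset.mem_sdiff.2 ⟨ha, haSx⟩)
        rw [erase_erase, Finset.union_comm] at this
        exact this

/-- Same colour exchange, commuting case. -/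
lemma se1_left {G : Pos α} (hwf : G.WF) (hrel : G.Relevant) {x x' : α}
    (hx : x ∈ G.left) (hx' : x' ∈ G.left) (h1 : x' ∉ G.Rmv x) (h2 : x ∉ G.Rmv x') :
    G.Rmv x ∪ (G.move x).Rmv x' = G.Rmv x' ∪ (G.move x').Rmv x := by
  rw [joint_left hwf hrel hx hx' h1, joint_left hwf hrel hx' hx h2,
    Finset.union_comm (G.Succ x') (G.Succ x)]

lemma move_move_se2_left {G : Pos α} (hwf : G.WF) (hrel : G.Relevant) {x x' : α}
    (hx : x ∈ G.left) (hx' : x' ∈ G.left) (hsurv : x' ∉ G.Rmv x)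
    (hin : x ∈ G.Rmv x') : (G.move x).move x' = G.move x' := by
  rw [move_move, se2_left hwf hrel hx hx' hsurv hin]; rfl

lemma move_move_se1_left {G : Pos α} (hwf : G.WF) (hrel : G.Relevant) {x x' : α}
    (hx : x ∈ G.left) (hx' : x' ∈ G.left) (h1 : x' ∉ G.Rmv x) (h2 : x ∉ G.Rmv x') :
    (G.move x).move x' = (G.move x').move x := by
  rw [move_move, move_move, se1_left hwf hrel hx hx' h1 h2]

/-! ### Right-coloured duals via `op` -/

lemma mem_op_left {G : Pos α} {y : α} (hy : y ∈ G.R) : y ∈ (op G).left := by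
  rw [op_left]; exact hy

lemma mem_op_R {G : Pos α} (hwf : G.WF) {x : α} (hx : x ∈ G.left) : x ∈ (op G).R := by
  rw [op_R hwf]; exact hx

lemma Rmv_mono_right {G : Pos α} (hwf : G.WF) (hrel : G.Relevant) {y z : α}
    (hy : y ∈ G.R) (hz : z ∈ G.R) (hzR : z ∈ G.Rmv y) : G.Rmv z ⊆ G.Rmv y := by
  have := Rmv_mono_left hwf.op (hrel.op hwf) (mem_op_left hy) (mem_op_left hz)
    (by rw [op_Rmv hwf (hwf.R_sub hy)]; exact hzR)
  rwa [op_Rmv hwf (hwf.R_sub hz), op_Rmv hwf (hwf.R_sub hy)] at this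

lemma se2_right {G : Pos α} (hwf : G.WF) (hrel : G.Relevant) {y y' : α}
    (hy : y ∈ G.R) (hy' : y' ∈ G.R) (hsurv : y' ∉ G.Rmv y) (hin : y ∈ G.Rmv y') :
    G.Rmv y ∪ (G.move y).Rmv y' = G.Rmv y' := by
  have hyV := hwf.R_sub hy
  have hy'V := hwf.R_sub hy'
  have h := se2_left hwf.op (hrel.op hwf) (mem_op_left hy) (mem_op_left hy')
    (by rw [op_Rmv hwf hyV]; exact hsurv) (by rw [op_Rmv hwf hy'V]; exact hin)
  rw [op_Rmv hwf hyV, op_Rmv hwf hy'V, op_move hwf hyV] at h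
  rwa [op_Rmv (hwf.move y) (by
    rw [move_V, Finset.mem_sdiff]; exact ⟨hy'V, hsurv⟩)] at h

lemma se1_right {G : Pos α} (hwf : G.WF) (hrel : G.Relevant) {y y' : α}
    (hy : y ∈ G.R) (hy' : y' ∈ G.R) (h1 : y' ∉ G.Rmv y) (h2 : y ∉ G.Rmv y') :
    G.Rmv y ∪ (G.move y).Rmv y' = G.Rmv y' ∪ (G.move y').Rmv y := by
  have hyV := hwf.R_sub hy
  have hy'V := hwf.R_sub hy'
  have h := se1_left hwf.op (hrel.op hwf) (mem_op_left hy) (mem_op_left hy')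
    (by rw [op_Rmv hwf hyV]; exact h1) (by rw [op_Rmv hwf hy'V]; exact h2)
  rw [op_Rmv hwf hyV, op_Rmv hwf hy'V, op_move hwf hyV, op_move hwf hy'V] at h
  rw [op_Rmv (hwf.move y) (by
    rw [move_V, Finset.mem_sdiff]; exact ⟨hy'V, h1⟩)] at h
  rwa [op_Rmv (hwf.move y') (by
    rw [move_V, Finset.mem_sdiff]; exact ⟨hyV, h2⟩)] at h

lemma move_move_se2_right {G : Pos α} (hwf : G.WF) (hrel : G.Relevant) {y y' : α}
    (hy : y ∈ G.R) (hy' : y' ∈ G.R) (hsurv : y' ∉ G.Rmv y) (hin : y ∈ G.Rmv y') :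
    (G.move y).move y' = G.move y' := by
  rw [move_move, se2_right hwf hrel hy hy' hsurv hin]; rfl

lemma move_move_se1_right {G : Pos α} (hwf : G.WF) (hrel : G.Relevant) {y y' : α}
    (hy : y ∈ G.R) (hy' : y' ∈ G.R) (h1 : y' ∉ G.Rmv y) (h2 : y ∉ G.Rmv y') :
    (G.move y).move y' = (G.move y').move y := by
  rw [move_move, move_move, se1_right hwf hrel hy hy' h1 h2]

/-- Cross-colour commutation, Right first. -/
lemma Rmv_move_cross' {G : Pos α} (hwf : G.WF) (hrel : G.Relevant) {x y : α}
    (hx : x ∈ G.left) (hy : y ∈ G.R) (hyx : y ∉ G.Rmv x) (hxy : x ∉ G.Rmv y) :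
    (G.move y).Rmv x = G.Rmv x \ G.Rmv y := by
  have hyV := hwf.R_sub hy
  have hxV := hwf.left_sub hx
  have h := Rmv_move_cross hwf.op (hrel.op hwf) (mem_op_left hy) (mem_op_R hwf hx)
    (by rw [op_Rmv hwf hyV]; exact hxy) (by rw [op_Rmv hwf hxV]; exact hyx)
  rw [op_Rmv hwf hyV, op_Rmv hwf hxV, op_move hwf hyV] at h
  rwa [op_Rmv (hwf.move y) (by
    rw [move_V, Finset.mem_sdiff]; exact ⟨hxV, hxy⟩)] at h

lemma move_move_cross' {G : Pos α} (hwf : G.WF) (hrel : G.Relevant) {x y : α}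
    (hx : x ∈ G.left) (hy : y ∈ G.R) (hyx : y ∉ G.Rmv x) (hxy : x ∉ G.Rmv y) :
    (G.move y).move x = G.erase (G.Rmv y ∪ G.Rmv x) := by
  rw [move_move, Rmv_move_cross' hwf hrel hx hy hyx hxy,
    Finset.union_sdiff_self_eq_union]

end Pos
end Influence
namespace Influence
namespace Pos

variable {α : Type} [DecidableEq α]

@[simp] lemma union_V (G1 G2 : Pos α) : (G1.union G2).V = G1.V ∪ G2.V := rfl
@[simp] lemma union_A (G1 G2 : Pos α) : (G1.union G2).A = G1.A ∪ G2.A := rfl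
@[simp] lemma union_left (G1 G2 : Pos α) : (G1.union G2).left = G1.left ∪ G2.left := rfl

lemma union_comm' (G1 G2 : Pos α) : G1.union G2 = G2.union G1 :=
  ext' (Finset.union_comm _ _) (Finset.union_comm _ _) (Finset.union_comm _ _)

lemma WF.union {G1 G2 : Pos α} (h1 : G1.WF) (h2 : G2.WF) : (G1.union G2).WF := by
  constructor
  · intro p hp
    rcases Finset.mem_union.1 hp with hp | hp
    · exact ⟨Finset.mem_union_left _ (h1.arc_fst hp),
        Finset.mem_union_left _ (h1.arc_snd hp)⟩
    · exact ⟨Finset.mem_union_right _ (h2.arc_fst hp),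
        Finset.mem_union_right _ (h2.arc_snd hp)⟩
  · exact Finset.union_subset_union h1.left_sub h2.left_sub

lemma R_union {G1 G2 : Pos α} (h1 : G1.WF) (h2 : G2.WF)
    (hdisj : Disjoint G1.V G2.V) : (G1.union G2).R = G1.R ∪ G2.R := by
  ext a
  simp only [Pos.R, union_V, union_left, Finset.mem_sdiff, Finset.mem_union]
  have k1 : a ∈ G1.left → a ∈ G1.V := fun h => h1.left_sub h
  have k2 : a ∈ G2.left → a ∈ G2.V := fun h => h2.left_sub h
  have k3 : a ∈ G1.V → a ∉ G2.V := fun h => Finset.disjoint_left.1 hdisj h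
  tauto

lemma reach_union_fst {G1 G2 : Pos α} (h1 : G1.WF) (h2 : G2.WF)
    (hdisj : Disjoint G1.V G2.V) {a b : α} (hr : (G1.union G2).Reach a b) :
    a ∈ G1.V → G1.Reach a b := by
  induction hr using Relation.ReflTransGen.head_induction_on with
  | refl => exact fun _ => Relation.ReflTransGen.refl
  | head harc hrest ih =>
      intro ha
      rcases Finset.mem_union.1 harc with h | h
      · exact Relation.ReflTransGen.head h (ih (h1.arc_snd h))
      · exact absurd (h2.arc_fst h) (Finset.disjoint_left.1 hdisj ha)

lemma reach_union_snd {G1 G2 : Pos α} (h1 : G1.WF) (h2 : G2.WF)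
    (hdisj : Disjoint G1.V G2.V) {a b : α} (hr : (G1.union G2).Reach a b) :
    b ∈ G1.V → G1.Reach a b := by
  induction hr with
  | refl => exact fun _ => Relation.ReflTransGen.refl
  | tail hzc harc ih =>
      intro hb
      rcases Finset.mem_union.1 harc with h | h
      · exact Relation.ReflTransGen.tail (ih (h1.arc_fst h)) h
      · exact absurd (h2.arc_snd h) (Finset.disjoint_left.1 hdisj hb)

lemma reach_union_of_fst {G1 G2 : Pos α} {a b : α} (hr : G1.Reach a b) :
    (G1.union G2).Reach a b := by
  induction hr with
  | refl => exact Relation.ReflTransGen.refl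
  | tail _ harc ih =>
      exact Relation.ReflTransGen.tail ih (Finset.mem_union_left _ harc)

lemma Succ_union_fst {G1 G2 : Pos α} (h1 : G1.WF) (h2 : G2.WF)
    (hdisj : Disjoint G1.V G2.V) {x : α} (hx : x ∈ G1.V) :
    (G1.union G2).Succ x = G1.Succ x := by
  ext z
  rw [mem_Succ, mem_Succ, union_V]
  constructor
  · rintro ⟨hzV, hr⟩
    have := reach_union_fst h1 h2 hdisj hr hx
    exact ⟨this.mem_V h1 hx, this⟩
  · rintro ⟨hzV, hr⟩
    exact ⟨Finset.mem_union_left _ hzV, reach_union_of_fst hr⟩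

lemma Pred_union_fst {G1 G2 : Pos α} (h1 : G1.WF) (h2 : G2.WF)
    (hdisj : Disjoint G1.V G2.V) {x : α} (hx : x ∈ G1.V) :
    (G1.union G2).Pred x = G1.Pred x := by
  ext z
  rw [mem_Pred, mem_Pred, union_V]
  constructor
  · rintro ⟨hzV, hr⟩
    have := reach_union_snd h1 h2 hdisj hr hx
    have hzV1 : z ∈ G1.V := by
      rcases this.cases_head with hc | ⟨d, hd, _⟩
      · exact hc ▸ hx
      · exact h1.arc_fst hd
    exact ⟨hzV1, this⟩
  · rintro ⟨hzV, hr⟩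
    exact ⟨Finset.mem_union_left _ hzV, reach_union_of_fst hr⟩

lemma ForcL_union {G1 G2 : Pos α} (h1 : G1.WF) (h2 : G2.WF)
    (hdisj : Disjoint G1.V G2.V) :
    (G1.union G2).ForcL = G1.ForcL ∪ G2.ForcL := by
  have hdisj' : Disjoint G2.V G1.V := hdisj.symm
  ext x
  simp only [mem_ForcL, Finset.mem_union, union_left]
  constructor
  · rintro ⟨hx | hx, hs⟩
    · refine Or.inl ⟨hx, fun z hz => ?_⟩
      have hxV : x ∈ G1.V := h1.left_sub hx
      have := hs (by rw [Succ_union_fst h1 h2 hdisj hxV]; exact hz)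
      rcases Finset.mem_union.1 this with h | h
      · exact h
      · exact absurd (Succ_subset_V hz)
          (Finset.disjoint_right.1 hdisj (h2.left_sub h))
    · refine Or.inr ⟨hx, fun z hz => ?_⟩
      have hxV : x ∈ G2.V := h2.left_sub hx
      have hSu : (G1.union G2).Succ x = G2.Succ x := by
        rw [union_comm']
        exact Succ_union_fst h2 h1 hdisj' hxV
      have := hs (by rw [hSu]; exact hz)
      rcases Finset.mem_union.1 this with h | h
      · exact absurd (Succ_subset_V hz)
          (Finset.disjoint_right.1 hdisj' (h1.left_sub h))
      · exact h
  · rintro (⟨hx, hs⟩ | ⟨hx, hs⟩)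
    · refine ⟨Or.inl hx, fun z hz => ?_⟩
      rw [Succ_union_fst h1 h2 hdisj (h1.left_sub hx)] at hz
      exact Finset.mem_union_left _ (hs hz)
    · refine ⟨Or.inr hx, fun z hz => ?_⟩
      have hSu : (G1.union G2).Succ x = G2.Succ x := by
        rw [union_comm']
        exact Succ_union_fst h2 h1 hdisj' (h2.left_sub hx)
      rw [hSu] at hz
      exact Finset.mem_union_right _ (hs hz)

lemma ForcR_union {G1 G2 : Pos α} (h1 : G1.WF) (h2 : G2.WF)
    (hdisj : Disjoint G1.V G2.V) :
    (G1.union G2).ForcR = G1.ForcR ∪ G2.ForcR := by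
  have hdisj' : Disjoint G2.V G1.V := hdisj.symm
  have hR := R_union h1 h2 hdisj
  ext x
  simp only [mem_ForcR, Finset.mem_union, hR]
  constructor
  · rintro ⟨hx | hx, hs⟩
    · refine Or.inl ⟨hx, fun z hz => ?_⟩
      have hxV : x ∈ G1.V := h1.R_sub hx
      have := hs (by rw [Pred_union_fst h1 h2 hdisj hxV]; exact hz)
      rcases Finset.mem_union.1 this with h | h
      · exact h
      · exact absurd (Pred_subset_V hz)
          (Finset.disjoint_right.1 hdisj (h2.R_sub h))
    · refine Or.inr ⟨hx, fun z hz => ?_⟩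
      have hxV : x ∈ G2.V := h2.R_sub hx
      have hSu : (G1.union G2).Pred x = G2.Pred x := by
        rw [union_comm']
        exact Pred_union_fst h2 h1 hdisj' hxV
      have := hs (by rw [hSu]; exact hz)
      rcases Finset.mem_union.1 this with h | h
      · exact absurd (Pred_subset_V hz)
          (Finset.disjoint_right.1 hdisj' (h1.R_sub h))
      · exact h
  · rintro (⟨hx, hs⟩ | ⟨hx, hs⟩)
    · refine ⟨Or.inl hx, fun z hz => ?_⟩
      rw [Pred_union_fst h1 h2 hdisj (h1.R_sub hx)] at hz
      exact Finset.mem_union_left _ (hs hz)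
    · refine ⟨Or.inr hx, fun z hz => ?_⟩
      have hSu : (G1.union G2).Pred x = G2.Pred x := by
        rw [union_comm']
        exact Pred_union_fst h2 h1 hdisj' (h2.R_sub hx)
      rw [hSu] at hz
      exact Finset.mem_union_right _ (hs hz)

lemma Forc_union {G1 G2 : Pos α} (h1 : G1.WF) (h2 : G2.WF)
    (hdisj : Disjoint G1.V G2.V) :
    (G1.union G2).Forc = G1.Forc ∪ G2.Forc := by
  unfold Forc
  rw [ForcL_union h1 h2 hdisj, ForcR_union h1 h2 hdisj]
  ext a
  simp only [Finset.mem_union]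
  tauto

lemma Relevant.union {G1 G2 : Pos α} (h1 : G1.WF) (h2 : G2.WF)
    (hdisj : Disjoint G1.V G2.V) (hr1 : G1.Relevant) (hr2 : G2.Relevant) :
    (G1.union G2).Relevant := by
  unfold Relevant
  rw [Forc_union h1 h2 hdisj, hr1, hr2, Finset.union_empty]

lemma erase_union_fst {G1 G2 : Pos α} (h1 : G1.WF) (h2 : G2.WF)
    (hdisj : Disjoint G1.V G2.V) {S : Finset α} (hS : S ⊆ G1.V) :
    (G1.union G2).erase S = (G1.erase S).union G2 := by
  have hSV2 : ∀ a, a ∈ G2.V → a ∉ S :=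
    fun a ha h => Finset.disjoint_left.1 hdisj (hS h) ha
  refine ext' ?_ ?_ ?_
  · ext a
    simp only [erase_V, union_V, Finset.mem_sdiff, Finset.mem_union]
    have := hSV2 a
    tauto
  · ext p
    simp only [erase_A, union_A, Finset.mem_union, Finset.mem_filter,
      Finset.mem_sdiff, union_V, erase_V]
    constructor
    · rintro ⟨hp | hp, ⟨ha1, ha2⟩, hb1, hb2⟩
      · refine Or.inl ⟨hp, ⟨⟨h1.arc_fst hp, ha2⟩, h1.arc_snd hp, hb2⟩⟩
      · exact Or.inr hp
    · rintro (⟨hp, ⟨ha1, ha2⟩, hb1, hb2⟩ | hp)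
      · exact ⟨Or.inl hp, ⟨Or.inl ha1, ha2⟩, Or.inl hb1, hb2⟩
      · refine ⟨Or.inr hp, ⟨Or.inr (h2.arc_fst hp), hSV2 _ (h2.arc_fst hp)⟩,
          Or.inr (h2.arc_snd hp), hSV2 _ (h2.arc_snd hp)⟩
  · ext a
    simp only [erase_left, union_left, Finset.mem_sdiff, Finset.mem_union]
    have := fun h => hSV2 a (h2.left_sub h)
    tauto

lemma Rmv_union_fst {G1 G2 : Pos α} (h1 : G1.WF) (h2 : G2.WF)
    (hdisj : Disjoint G1.V G2.V) (hrel2 : G2.Relevant) {x : α} (hx : x ∈ G1.V) :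
    (G1.union G2).Rmv x = G1.Rmv x := by
  have hxn2 : x ∉ G2.V := Finset.disjoint_left.1 hdisj hx
  by_cases hxl : x ∈ G1.left
  · have hxl' : x ∈ (G1.union G2).left :=
      Finset.mem_union_left _ hxl
    rw [Rmv_left_def hxl', Rmv_left_def hxl, Succ_union_fst h1 h2 hdisj hx,
      erase_union_fst h1 h2 hdisj Succ_subset_V,
      Forc_union (h1.erase _) h2 (Finset.disjoint_of_subset_left (by
        rw [erase_V]; exact Finset.sdiff_subset) hdisj), hrel2,
      Finset.union_empty]
  · have hxl' : x ∉ (G1.union G2).left := by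
      rw [union_left, Finset.mem_union]
      rintro (h | h)
      · exact hxl h
      · exact hxn2 (h2.left_sub h)
    rw [Rmv_right_def hxl', Rmv_right_def hxl, Pred_union_fst h1 h2 hdisj hx,
      erase_union_fst h1 h2 hdisj Pred_subset_V,
      Forc_union (h1.erase _) h2 (Finset.disjoint_of_subset_left (by
        rw [erase_V]; exact Finset.sdiff_subset) hdisj), hrel2,
      Finset.union_empty]

lemma move_union_fst {G1 G2 : Pos α} (h1 : G1.WF) (h2 : G2.WF)
    (hdisj : Disjoint G1.V G2.V) (hrel2 : G2.Relevant) {x : α} (hx : x ∈ G1.V) :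
    (G1.union G2).move x = (G1.move x).union G2 := by
  unfold move
  rw [Rmv_union_fst h1 h2 hdisj hrel2 hx,
    erase_union_fst h1 h2 hdisj (Rmv_subset_V h1 x)]

lemma Rmv_union_snd {G1 G2 : Pos α} (h1 : G1.WF) (h2 : G2.WF)
    (hdisj : Disjoint G1.V G2.V) (hrel1 : G1.Relevant) {x : α} (hx : x ∈ G2.V) :
    (G1.union G2).Rmv x = G2.Rmv x := by
  rw [union_comm']
  exact Rmv_union_fst h2 h1 hdisj.symm hrel1 hx

lemma move_union_snd {G1 G2 : Pos α} (h1 : G1.WF) (h2 : G2.WF)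
    (hdisj : Disjoint G1.V G2.V) (hrel1 : G1.Relevant) {x : α} (hx : x ∈ G2.V) :
    (G1.union G2).move x = G1.union (G2.move x) := by
  rw [union_comm', move_union_fst h2 h1 hdisj.symm hrel1 hx, union_comm']

end Pos
end Influence
namespace Influence
namespace Pos

variable {α : Type} [DecidableEq α]

/-- `H'` is the negative (colour-swapped, arc-reversed disjoint copy) of `H` via `f`. -/
def NegOf (H H' : Pos α) (f : α → α) : Prop :=
  H.WF ∧ Set.InjOn f ↑H.V ∧ H'.V = H.V.image f ∧ H'.left = H.R.image f ∧
    H'.A = H.A.image (fun p => (f p.2, f p.1))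

namespace NegOf

variable {H H' : Pos α} {f : α → α}

lemma wf (hn : NegOf H H' f) : H.WF := hn.1
lemma inj (hn : NegOf H H' f) : Set.InjOn f ↑H.V := hn.2.1
lemma hV (hn : NegOf H H' f) : H'.V = H.V.image f := hn.2.2.1
lemma hL (hn : NegOf H H' f) : H'.left = H.R.image f := hn.2.2.2.1
lemma hA (hn : NegOf H H' f) : H'.A = H.A.image (fun p => (f p.2, f p.1)) := hn.2.2.2.2

lemma inj_eq (hn : NegOf H H' f) {a b : α} (ha : a ∈ H.V) (hb : b ∈ H.V)
    (h : f a = f b) : a = b := hn.inj (by exact_mod_cast ha) (by exact_mod_cast hb) h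

lemma mem_image_iff (hn : NegOf H H' f) {s : Finset α} (hs : s ⊆ H.V) {v : α}
    (hv : v ∈ H.V) : f v ∈ s.image f ↔ v ∈ s := by
  constructor
  · intro h
    rcases Finset.mem_image.1 h with ⟨w, hw, hwv⟩
    rwa [hn.inj_eq (hs hw) hv hwv] at hw
  · exact fun h => Finset.mem_image_of_mem f h

lemma image_sdiff' (hn : NegOf H H' f) {s t : Finset α} (hs : s ⊆ H.V)
    (ht : t ⊆ H.V) : (s \ t).image f = s.image f \ t.image f := by
  ext a
  simp only [Finset.mem_image, Finset.mem_sdiff]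
  constructor
  · rintro ⟨w, ⟨hws, hwt⟩, rfl⟩
    refine ⟨⟨w, hws, rfl⟩, fun h => ?_⟩
    rcases h with ⟨u, hut, hue⟩
    rw [hn.inj_eq (ht hut) (hs hws) hue] at hut
    exact hwt hut
  · rintro ⟨⟨w, hws, rfl⟩, h⟩
    exact ⟨w, ⟨hws, fun hw => h ⟨w, hw, rfl⟩⟩, rfl⟩

lemma wf' (hn : NegOf H H' f) : H'.WF := by
  constructor
  · intro p hp
    rw [hn.hA] at hp
    rcases Finset.mem_image.1 hp with ⟨q, hq, rfl⟩
    rw [hn.hV]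
    exact ⟨Finset.mem_image_of_mem f (hn.wf.arc_snd hq),
      Finset.mem_image_of_mem f (hn.wf.arc_fst hq)⟩
  · rw [hn.hL, hn.hV]
    exact Finset.image_subset_image hn.wf.R_sub

lemma hR (hn : NegOf H H' f) : H'.R = H.left.image f := by
  rw [Pos.R, hn.hV, hn.hL, ← hn.image_sdiff' le_rfl hn.wf.R_sub]
  congr 1
  ext a
  simp only [Finset.mem_sdiff, Pos.R, not_and, not_not]
  constructor
  · rintro ⟨h1, h2⟩; exact h2 h1
  · intro h; exact ⟨hn.wf.left_sub h, fun _ => h⟩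

lemma reach' (hn : NegOf H H' f) {a b : α} (ha : a ∈ H.V) (hb : b ∈ H.V) :
    H'.Reach (f a) (f b) ↔ H.Reach b a := by
  constructor
  · intro h
    have key : ∀ u v, H'.Reach u v → ∀ a b, a ∈ H.V → b ∈ H.V → u = f a →
        v = f b → H.Reach b a := by
      intro u v hr
      induction hr using Relation.ReflTransGen.head_induction_on with
      | refl =>
          rintro a b ha hb rfl heq
          rw [hn.inj_eq ha hb heq]
          exact Relation.ReflTransGen.refl
      | head harc hrest ih =>
          rintro a b ha hb rfl rfl
          rw [hn.hA] at harc
          rcases Finset.mem_image.1 harc with ⟨q, hq, heq⟩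
          have h2 : f q.2 = f a := congrArg Prod.fst heq
          have h1 := congrArg Prod.snd heq
          have hq1 : q.1 ∈ H.V := hn.wf.arc_fst hq
          have hq2 : q.2 ∈ H.V := hn.wf.arc_snd hq
          have : q.2 = a := hn.inj_eq hq2 ha h2
          subst this
          have := ih q.1 b hq1 hb h1.symm rfl
          exact this.tail hq
    exact key _ _ h a b ha hb rfl rfl
  · intro h
    clear hb
    induction h using Relation.ReflTransGen.head_induction_on with
    | refl => exact Relation.ReflTransGen.refl
    | head harc hrest ih =>
        refine ih.tail ?_
        rw [hn.hA]
        exact Finset.mem_image.2 ⟨_, harc, rfl⟩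

lemma Succ' (hn : NegOf H H' f) {v : α} (hv : v ∈ H.V) :
    H'.Succ (f v) = (H.Pred v).image f := by
  ext b
  rw [mem_Succ]
  constructor
  · rintro ⟨hbV, hr⟩
    rw [hn.hV] at hbV
    rcases Finset.mem_image.1 hbV with ⟨w, hw, rfl⟩
    exact Finset.mem_image_of_mem f
      (mem_Pred.2 ⟨hw, (hn.reach' hv hw).1 hr⟩)
  · intro h
    rcases Finset.mem_image.1 h with ⟨w, hw, rfl⟩
    rcases mem_Pred.1 hw with ⟨hwV, hr⟩
    refine ⟨by rw [hn.hV]; exact Finset.mem_image_of_mem f hwV, ?_⟩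
    exact (hn.reach' hv hwV).2 hr

lemma Pred' (hn : NegOf H H' f) {v : α} (hv : v ∈ H.V) :
    H'.Pred (f v) = (H.Succ v).image f := by
  ext b
  rw [mem_Pred]
  constructor
  · rintro ⟨hbV, hr⟩
    rw [hn.hV] at hbV
    rcases Finset.mem_image.1 hbV with ⟨w, hw, rfl⟩
    exact Finset.mem_image_of_mem f
      (mem_Succ.2 ⟨hw, (hn.reach' hw hv).1 hr⟩)
  · intro h
    rcases Finset.mem_image.1 h with ⟨w, hw, rfl⟩
    rcases mem_Succ.1 hw with ⟨hwV, hr⟩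
    refine ⟨by rw [hn.hV]; exact Finset.mem_image_of_mem f hwV, ?_⟩
    exact (hn.reach' hwV hv).2 hr

lemma erase' (hn : NegOf H H' f) {S : Finset α} (hS : S ⊆ H.V) :
    NegOf (H.erase S) (H'.erase (S.image f)) f := by
  refine ⟨hn.wf.erase S, hn.inj.mono (by
    rw [erase_V]; exact_mod_cast Finset.sdiff_subset), ?_, ?_, ?_⟩
  · rw [erase_V, erase_V, hn.hV, hn.image_sdiff' le_rfl hS]
  · rw [erase_left, erase_R, hn.hL, hn.image_sdiff' hn.wf.R_sub hS]
  · rw [erase_A, erase_A, hn.hA]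
    ext p
    simp only [Finset.mem_filter, Finset.mem_image, erase_V]
    constructor
    · rintro ⟨⟨q, hq, rfl⟩, h1, h2⟩
      refine ⟨q, ⟨hq, ?_, ?_⟩, rfl⟩
      · have hq1 : q.1 ∈ H.V := hn.wf.arc_fst hq
        rw [hn.hV, ← hn.image_sdiff' le_rfl hS] at h2
        rcases Finset.mem_image.1 h2 with ⟨w, hw, hwe⟩
        rwa [hn.inj_eq ((Finset.mem_sdiff.1 hw).1) hq1 hwe] at hw
      · have hq2 : q.2 ∈ H.V := hn.wf.arc_snd hq
        rw [hn.hV, ← hn.image_sdiff' le_rfl hS] at h1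
        rcases Finset.mem_image.1 h1 with ⟨w, hw, hwe⟩
        rwa [hn.inj_eq ((Finset.mem_sdiff.1 hw).1) hq2 hwe] at hw
    · rintro ⟨q, ⟨hq, h1, h2⟩, rfl⟩
      refine ⟨⟨q, hq, rfl⟩, ?_, ?_⟩
      · rw [hn.hV, ← hn.image_sdiff' le_rfl hS]
        exact Finset.mem_image_of_mem f h2
      · rw [hn.hV, ← hn.image_sdiff' le_rfl hS]
        exact Finset.mem_image_of_mem f h1

lemma forcL' (hn : NegOf H H' f) : H'.ForcL = H.ForcR.image f := by
  ext b
  rw [mem_ForcL]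
  constructor
  · rintro ⟨hbl, hbs⟩
    rw [hn.hL] at hbl
    rcases Finset.mem_image.1 hbl with ⟨w, hw, rfl⟩
    have hwV : w ∈ H.V := hn.wf.R_sub hw
    refine Finset.mem_image_of_mem f (mem_ForcR.2 ⟨hw, fun z hz => ?_⟩)
    have : f z ∈ H'.Succ (f w) := by
      rw [hn.Succ' hwV]
      exact Finset.mem_image_of_mem f hz
    have := hbs this
    rw [hn.hL] at this
    rcases Finset.mem_image.1 this with ⟨u, hu, hue⟩
    rwa [hn.inj_eq (hn.wf.R_sub hu) (Pred_subset_V hz) hue] at hu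
  · intro h
    rcases Finset.mem_image.1 h with ⟨w, hw, rfl⟩
    rcases mem_ForcR.1 hw with ⟨hwR, hws⟩
    have hwV : w ∈ H.V := hn.wf.R_sub hwR
    refine ⟨by rw [hn.hL]; exact Finset.mem_image_of_mem f hwR, ?_⟩
    intro z hz
    rw [hn.Succ' hwV] at hz
    rcases Finset.mem_image.1 hz with ⟨u, hu, rfl⟩
    rw [hn.hL]
    exact Finset.mem_image_of_mem f (hws hu)

lemma forcR' (hn : NegOf H H' f) : H'.ForcR = H.ForcL.image f := by
  ext b
  rw [mem_ForcR]
  constructor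
  · rintro ⟨hbl, hbs⟩
    rw [hn.hR] at hbl
    rcases Finset.mem_image.1 hbl with ⟨w, hw, rfl⟩
    have hwV : w ∈ H.V := hn.wf.left_sub hw
    refine Finset.mem_image_of_mem f (mem_ForcL.2 ⟨hw, fun z hz => ?_⟩)
    have : f z ∈ H'.Pred (f w) := by
      rw [hn.Pred' hwV]
      exact Finset.mem_image_of_mem f hz
    have := hbs this
    rw [hn.hR] at this
    rcases Finset.mem_image.1 this with ⟨u, hu, hue⟩
    rwa [hn.inj_eq (hn.wf.left_sub hu) (Succ_subset_V hz) hue] at hu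
  · intro h
    rcases Finset.mem_image.1 h with ⟨w, hw, rfl⟩
    rcases mem_ForcL.1 hw with ⟨hwR, hws⟩
    have hwV : w ∈ H.V := hn.wf.left_sub hwR
    refine ⟨by rw [hn.hR]; exact Finset.mem_image_of_mem f hwR, ?_⟩
    intro z hz
    rw [hn.Pred' hwV] at hz
    rcases Finset.mem_image.1 hz with ⟨u, hu, rfl⟩
    rw [hn.hR]
    exact Finset.mem_image_of_mem f (hws hu)

lemma forc' (hn : NegOf H H' f) : H'.Forc = H.Forc.image f := by
  unfold Forc
  rw [hn.forcL', hn.forcR', Finset.image_union, Finset.union_comm]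

lemma relevant' (hn : NegOf H H' f) (hrel : H.Relevant) : H'.Relevant := by
  unfold Relevant
  rw [hn.forc', hrel, Finset.image_empty]

lemma rmv' (hn : NegOf H H' f) {v : α} (hv : v ∈ H.V) :
    H'.Rmv (f v) = (H.Rmv v).image f := by
  by_cases hvl : v ∈ H.left
  · have h1 : f v ∉ H'.left := by
      rw [hn.hL]
      intro h
      rcases Finset.mem_image.1 h with ⟨w, hw, hwe⟩
      have := hn.inj_eq (hn.wf.R_sub hw) hv hwe
      subst this
      exact (mem_R.1 hw).2 hvl
    rw [Rmv_right_def h1, Rmv_left_def hvl, hn.Pred' hv, Finset.image_union]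
    congr 1
    rw [(hn.erase' (Succ_subset_V (x := v))).forc']
  · have hvR : v ∈ H.R := mem_R.2 ⟨hv, hvl⟩
    have h1 : f v ∈ H'.left := by
      rw [hn.hL]; exact Finset.mem_image_of_mem f hvR
    rw [Rmv_left_def h1, Rmv_right_def hvl, hn.Succ' hv, Finset.image_union]
    congr 1
    rw [(hn.erase' (Pred_subset_V (x := v))).forc']

lemma move' (hn : NegOf H H' f) {v : α} (hv : v ∈ H.V) :
    NegOf (H.move v) (H'.move (f v)) f := by
  have := hn.erase' (Rmv_subset_V hn.wf v)
  rwa [show (H.Rmv v).image f = H'.Rmv (f v) from (hn.rmv' hv).symm] at this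

lemma card_V (hn : NegOf H H' f) : H'.V.card = H.V.card := by
  rw [hn.hV]
  exact Finset.card_image_of_injOn hn.inj

lemma card_rmv (hn : NegOf H H' f) {v : α} (hv : v ∈ H.V) :
    (H'.Rmv (f v)).card = (H.Rmv v).card := by
  rw [hn.rmv' hv]
  exact Finset.card_image_of_injOn
    (hn.inj.mono (by exact_mod_cast Rmv_subset_V hn.wf v))

end NegOf

end Pos
end Influence
namespace Influence
namespace Pos

variable {α : Type} [DecidableEq α]

lemma sL1Aux_zero (G : Pos α) : sL1Aux 0 G = 0 := by rw [sL1Aux]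
lemma sL2Aux_zero (G : Pos α) : sL2Aux 0 G = 0 := by rw [sL2Aux]
lemma sR1Aux_zero (G : Pos α) : sR1Aux 0 G = 0 := by rw [sR1Aux]
lemma sR2Aux_zero (G : Pos α) : sR2Aux 0 G = 0 := by rw [sR2Aux]

lemma sL1Aux_succ (k : ℕ) (G : Pos α) : sL1Aux (k + 1) G =
    if G.left.Nonempty then
      G.left.sup (fun x => (G.Rmv x).card + sL2Aux k (G.move x))
    else 0 := by rw [sL1Aux]

lemma sL2Aux_succ (k : ℕ) (G : Pos α) : sL2Aux (k + 1) G =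
    if h : G.R.Nonempty then G.R.inf' h (fun y => sL1Aux k (G.move y))
    else 0 := by rw [sL2Aux]

lemma sR1Aux_succ (k : ℕ) (G : Pos α) : sR1Aux (k + 1) G =
    if G.R.Nonempty then
      G.R.sup (fun y => (G.Rmv y).card + sR2Aux k (G.move y))
    else 0 := by rw [sR1Aux]

lemma sR2Aux_succ (k : ℕ) (G : Pos α) : sR2Aux (k + 1) G =
    if h : G.left.Nonempty then G.left.inf' h (fun x => sR1Aux k (G.move x))
    else 0 := by rw [sR2Aux]

lemma card_move_lt {G : Pos α} (hwf : G.WF) {x : α} (hx : x ∈ G.V) :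
    (G.move x).V.card < G.V.card := by
  rw [move_V]
  refine Finset.card_lt_card ?_
  refine Finset.sdiff_ssubset (Rmv_subset_V hwf x) ⟨x, mem_Rmv_self hx⟩

lemma card_move_eq {G : Pos α} (hwf : G.WF) (x : α) :
    (G.move x).V.card = G.V.card - (G.Rmv x).card := by
  rw [move_V]
  exact Finset.card_sdiff_of_subset (Rmv_subset_V hwf x)

lemma card_move_add {G : Pos α} (hwf : G.WF) {x : α} (hx : x ∈ G.V) :
    (G.move x).V.card + (G.Rmv x).card = G.V.card := by
  rw [card_move_eq hwf x]
  exact Nat.sub_add_cancel (Finset.card_le_card (Rmv_subset_V hwf x))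

lemma stab_aux : ∀ n : ℕ, ∀ G : Pos α, G.WF → G.V.card ≤ n → ∀ k, G.V.card ≤ k →
    sL1Aux k G = sL1Aux G.V.card G ∧ sL2Aux k G = sL2Aux G.V.card G ∧
    sR1Aux k G = sR1Aux G.V.card G ∧ sR2Aux k G = sR2Aux G.V.card G := by
  intro n
  induction n with
  | zero =>
      intro G hwf h0 k hk
      have hcard : G.V.card = 0 := Nat.le_zero.1 h0
      have hV : G.V = ∅ := Finset.card_eq_zero.1 hcard
      have hL : G.left = ∅ := Finset.subset_empty.1 (hV ▸ hwf.left_sub)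
      have hR : G.R = ∅ := by rw [Pos.R, hV]; exact Finset.empty_sdiff _
      rw [hcard]
      cases k with
      | zero => exact ⟨rfl, rfl, rfl, rfl⟩
      | succ k =>
          refine ⟨?_, ?_, ?_, ?_⟩
          · rw [sL1Aux_succ, sL1Aux_zero, if_neg (by rw [hL]; simp)]
          · rw [sL2Aux_succ, sL2Aux_zero, dif_neg (by rw [hR]; simp)]
          · rw [sR1Aux_succ, sR1Aux_zero, if_neg (by rw [hR]; simp)]
          · rw [sR2Aux_succ, sR2Aux_zero, dif_neg (by rw [hL]; simp)]
  | succ n ih =>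
      intro G hwf hcard k hk
      by_cases hc : G.V.card ≤ n
      · exact ih G hwf hc k hk
      have hcard' : G.V.card = n + 1 := le_antisymm hcard (Nat.not_le.1 hc)
      obtain ⟨k', rfl⟩ : ∃ k', k = k' + 1 := by
        rcases Nat.exists_eq_succ_of_ne_zero (Nat.pos_iff_ne_zero.1
          (lt_of_lt_of_le (by omega) hk)) with ⟨k', hk'⟩
        exact ⟨k', hk'⟩
      have hk' : n ≤ k' := by omega
      have key : ∀ z, z ∈ G.V →
          (sL2Aux k' (G.move z) = sL2Aux n (G.move z) ∧
           sL1Aux k' (G.move z) = sL1Aux n (G.move z) ∧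
           sR2Aux k' (G.move z) = sR2Aux n (G.move z) ∧
           sR1Aux k' (G.move z) = sR1Aux n (G.move z)) := by
        intro z hz
        have hlt : (G.move z).V.card ≤ n := by
          have := card_move_lt hwf hz
          omega
        have h1 := ih (G.move z) (hwf.move z) hlt k' (le_trans hlt hk')
        have h2 := ih (G.move z) (hwf.move z) hlt n hlt
        exact ⟨h1.2.1.trans h2.2.1.symm, h1.1.trans h2.1.symm,
          h1.2.2.2.trans h2.2.2.2.symm, h1.2.2.1.trans h2.2.2.1.symm⟩
      rw [hcard']
      refine ⟨?_, ?_, ?_, ?_⟩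
      · rw [sL1Aux_succ, sL1Aux_succ]
        by_cases hne : G.left.Nonempty
        · rw [if_pos hne, if_pos hne]
          refine Finset.sup_congr rfl ?_
          intro x hx
          rw [(key x (hwf.left_sub hx)).1]
        · rw [if_neg hne, if_neg hne]
      · rw [sL2Aux_succ, sL2Aux_succ]
        by_cases hne : G.R.Nonempty
        · rw [dif_pos hne, dif_pos hne]
          refine Finset.inf'_congr _ rfl ?_
          intro y hy
          rw [(key y (hwf.R_sub hy)).2.1]
        · rw [dif_neg hne, dif_neg hne]
      · rw [sR1Aux_succ, sR1Aux_succ]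
        by_cases hne : G.R.Nonempty
        · rw [if_pos hne, if_pos hne]
          refine Finset.sup_congr rfl ?_
          intro y hy
          rw [(key y (hwf.R_sub hy)).2.2.1]
        · rw [if_neg hne, if_neg hne]
      · rw [sR2Aux_succ, sR2Aux_succ]
        by_cases hne : G.left.Nonempty
        · rw [dif_pos hne, dif_pos hne]
          refine Finset.inf'_congr _ rfl ?_
          intro x hx
          rw [(key x (hwf.left_sub hx)).2.2.2]
        · rw [dif_neg hne, dif_neg hne]

lemma sL1Aux_stab {G : Pos α} (hwf : G.WF) {k : ℕ} (hk : G.V.card ≤ k) :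
    sL1Aux k G = G.sL1 := (stab_aux G.V.card G hwf le_rfl k hk).1
lemma sL2Aux_stab {G : Pos α} (hwf : G.WF) {k : ℕ} (hk : G.V.card ≤ k) :
    sL2Aux k G = G.sL2 := (stab_aux G.V.card G hwf le_rfl k hk).2.1
lemma sR1Aux_stab {G : Pos α} (hwf : G.WF) {k : ℕ} (hk : G.V.card ≤ k) :
    sR1Aux k G = G.sR1 := (stab_aux G.V.card G hwf le_rfl k hk).2.2.1
lemma sR2Aux_stab {G : Pos α} (hwf : G.WF) {k : ℕ} (hk : G.V.card ≤ k) :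
    sR2Aux k G = G.sR2 := (stab_aux G.V.card G hwf le_rfl k hk).2.2.2

lemma sL1_eq {G : Pos α} (hwf : G.WF) : G.sL1 =
    if G.left.Nonempty then
      G.left.sup (fun x => (G.Rmv x).card + sL2 (G.move x))
    else 0 := by
  show sL1Aux G.V.card G = _
  by_cases hne : G.left.Nonempty
  · have hpos : 0 < G.V.card :=
      Finset.card_pos.2 ⟨hne.choose, hwf.left_sub hne.choose_spec⟩
    obtain ⟨c, hc⟩ := Nat.exists_eq_succ_of_ne_zero (Nat.pos_iff_ne_zero.1 hpos)
    rw [hc, sL1Aux_succ, if_pos hne, if_pos hne]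
    refine Finset.sup_congr rfl ?_
    intro x hx
    have : (G.move x).V.card ≤ c := by
      have := card_move_lt hwf (hwf.left_sub hx)
      omega
    rw [sL2Aux_stab (hwf.move x) this]
  · rw [if_neg hne]
    cases hcc : G.V.card with
    | zero => rw [sL1Aux_zero]
    | succ c => rw [sL1Aux_succ, if_neg hne]

lemma sL2_eq {G : Pos α} (hwf : G.WF) : G.sL2 =
    if h : G.R.Nonempty then G.R.inf' h (fun y => sL1 (G.move y))
    else 0 := by
  show sL2Aux G.V.card G = _
  by_cases hne : G.R.Nonempty
  · have hpos : 0 < G.V.card :=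
      Finset.card_pos.2 ⟨hne.choose, hwf.R_sub hne.choose_spec⟩
    obtain ⟨c, hc⟩ := Nat.exists_eq_succ_of_ne_zero (Nat.pos_iff_ne_zero.1 hpos)
    rw [hc, sL2Aux_succ, dif_pos hne, dif_pos hne]
    refine Finset.inf'_congr _ rfl ?_
    intro y hy
    have : (G.move y).V.card ≤ c := by
      have := card_move_lt hwf (hwf.R_sub hy)
      omega
    rw [sL1Aux_stab (hwf.move y) this]
  · rw [dif_neg hne]
    cases hcc : G.V.card with
    | zero => rw [sL2Aux_zero]
    | succ c => rw [sL2Aux_succ, dif_neg hne]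

lemma op_scores : ∀ k : ℕ, ∀ G : Pos α, G.WF →
    sL1Aux k (op G) = sR1Aux k G ∧ sL2Aux k (op G) = sR2Aux k G ∧
    sR1Aux k (op G) = sL1Aux k G ∧ sR2Aux k (op G) = sL2Aux k G := by
  intro k
  induction k with
  | zero =>
      intro G hwf
      simp [sL1Aux_zero, sL2Aux_zero, sR1Aux_zero, sR2Aux_zero]
  | succ k ih =>
      intro G hwf
      have hL : (op G).left = G.R := op_left G
      have hRR : (op G).R = G.left := op_R hwf
      refine ⟨?_, ?_, ?_, ?_⟩
      · rw [sL1Aux_succ, sR1Aux_succ, hL]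
        by_cases hne : G.R.Nonempty
        · rw [if_pos hne, if_pos hne]
          refine Finset.sup_congr rfl ?_
          intro y hy
          have hyV : y ∈ G.V := hwf.R_sub hy
          rw [op_Rmv hwf hyV, op_move hwf hyV,
            (ih (G.move y) (hwf.move y)).2.1]
        · rw [if_neg hne, if_neg hne]
      · rw [sL2Aux_succ, sR2Aux_succ, hRR]
        by_cases hne : G.left.Nonempty
        · rw [dif_pos hne, dif_pos hne]
          refine Finset.inf'_congr _ rfl ?_
          intro x hx
          have hxV : x ∈ G.V := hwf.left_sub hx
          rw [op_move hwf hxV, (ih (G.move x) (hwf.move x)).1]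
        · rw [dif_neg hne, dif_neg hne]
      · rw [sR1Aux_succ, sL1Aux_succ, hRR]
        by_cases hne : G.left.Nonempty
        · rw [if_pos hne, if_pos hne]
          refine Finset.sup_congr rfl ?_
          intro x hx
          have hxV : x ∈ G.V := hwf.left_sub hx
          rw [op_Rmv hwf hxV, op_move hwf hxV,
            (ih (G.move x) (hwf.move x)).2.2.2]
        · rw [if_neg hne, if_neg hne]
      · rw [sR2Aux_succ, sL2Aux_succ, hL]
        by_cases hne : G.R.Nonempty
        · rw [dif_pos hne, dif_pos hne]
          refine Finset.inf'_congr _ rfl ?_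
          intro y hy
          have hyV : y ∈ G.V := hwf.R_sub hy
          rw [op_move hwf hyV, (ih (G.move y) (hwf.move y)).2.2.1]
        · rw [dif_neg hne, dif_neg hne]

lemma sR1_op {G : Pos α} (hwf : G.WF) : G.sR1 = sL1 (op G) := by
  show sR1Aux G.V.card G = sL1Aux (op G).V.card (op G)
  rw [op_V, (op_scores G.V.card G hwf).1]

lemma sR2_op {G : Pos α} (hwf : G.WF) : G.sR2 = sL2 (op G) := by
  show sR2Aux G.V.card G = sL2Aux (op G).V.card (op G)
  rw [op_V, (op_scores G.V.card G hwf).2.1]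

lemma V_eq_empty_of_left_empty {G : Pos α} (hwf : G.WF) (hrel : G.Relevant)
    (h : G.left = ∅) : G.V = ∅ := by
  have hR : G.R = G.V := by rw [Pos.R, h, Finset.sdiff_empty]
  have : G.ForcR = G.V := by
    apply Finset.Subset.antisymm
    · exact (ForcR_subset_R).trans (by rw [hR])
    · intro y hy
      refine mem_ForcR.2 ⟨by rw [hR]; exact hy, ?_⟩
      rw [hR]
      exact Pred_subset_V
  rw [← this, hrel.forcR]

lemma V_eq_empty_of_R_empty {G : Pos α} (hwf : G.WF) (hrel : G.Relevant)
    (h : G.R = ∅) : G.V = ∅ := by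
  have := V_eq_empty_of_left_empty hwf.op (hrel.op hwf) (by rw [op_left, h])
  rwa [op_V] at this

end Pos
end Influence
namespace Influence
namespace Pos

variable {α : Type} [DecidableEq α]

namespace NegOf

variable {H H' : Pos α} {f : α → α}

lemma disj_move_fst (hdisj : Disjoint H.V H'.V) (y : α) :
    Disjoint (H.move y).V H'.V :=
  Finset.disjoint_of_subset_left (by rw [move_V]; exact Finset.sdiff_subset) hdisj

lemma disj_move_snd (hdisj : Disjoint H.V H'.V) (z : α) :
    Disjoint H.V (H'.move z).V :=
  Finset.disjoint_of_subset_right (by rw [move_V]; exact Finset.sdiff_subset) hdisj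

lemma disj_move_both (hdisj : Disjoint H.V H'.V) (y z : α) :
    Disjoint (H.move y).V (H'.move z).V :=
  Finset.disjoint_of_subset_left (by rw [move_V]; exact Finset.sdiff_subset)
    (disj_move_snd hdisj z)

lemma mem_left' (hn : NegOf H H' f) {y : α} (hy : y ∈ H.R) : f y ∈ H'.left := by
  rw [hn.hL]; exact Finset.mem_image_of_mem f hy

lemma mem_R' (hn : NegOf H H' f) {x : α} (hx : x ∈ H.left) : f x ∈ H'.R := by
  rw [hn.hR]; exact Finset.mem_image_of_mem f hx

lemma mem_V' (hn : NegOf H H' f) {v : α} (hv : v ∈ H.V) : f v ∈ H'.V := by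
  rw [hn.hV]; exact Finset.mem_image_of_mem f hv

end NegOf

/-- Right's mirror strategy: upper bounds for the Left score. -/
lemma mirror_upper : ∀ k : ℕ, ∀ H H' : Pos α, ∀ f : α → α, NegOf H H' f →
    H.Relevant → Disjoint H.V H'.V →
    (sL1Aux k (H.union H') ≤ H.V.card) ∧
    (∀ x ∈ H.left, sL2Aux k ((H.move x).union H') + (H.Rmv x).card ≤ H.V.card) ∧
    (∀ y ∈ H.R, sL2Aux k (H.union (H'.move (f y))) + (H.Rmv y).card ≤ H.V.card) := by
  intro k
  induction k with
  | zero =>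
      intro H H' f hn hrel hdisj
      refine ⟨by rw [sL1Aux_zero]; exact Nat.zero_le _, ?_, ?_⟩
      · intro x hx
        rw [sL2Aux_zero, Nat.zero_add]
        exact Finset.card_le_card (Rmv_subset_V hn.wf x)
      · intro y hy
        rw [sL2Aux_zero, Nat.zero_add]
        exact Finset.card_le_card (Rmv_subset_V hn.wf y)
  | succ k ih =>
      intro H H' f hn hrel hdisj
      have hwf := hn.wf
      have hwf' := hn.wf'
      have hrel' := hn.relevant' hrel
      refine ⟨?_, ?_, ?_⟩
      · rw [sL1Aux_succ]
        by_cases hne : (H.union H').left.Nonempty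
        · rw [if_pos hne]
          refine Finset.sup_le ?_
          intro x hx
          rw [union_left, Finset.mem_union] at hx
          rcases hx with hx | hx
          · have hxV : x ∈ H.V := hwf.left_sub hx
            rw [Rmv_union_fst hwf hwf' hdisj hrel' hxV,
              move_union_fst hwf hwf' hdisj hrel' hxV]
            have := (ih H H' f hn hrel hdisj).2.1 x hx
            omega
          · rw [hn.hL] at hx
            rcases Finset.mem_image.1 hx with ⟨y, hy, rfl⟩
            have hyV : y ∈ H.V := hwf.R_sub hy
            have hxV' : f y ∈ H'.V := hn.mem_V' hyV
            rw [Rmv_union_snd hwf hwf' hdisj hrel hxV',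
              move_union_snd hwf hwf' hdisj hrel hxV',
              hn.card_rmv hyV]
            have := (ih H H' f hn hrel hdisj).2.2 y hy
            omega
        · rw [if_neg hne]
          exact Nat.zero_le _
      · intro x hx
        have hxV : x ∈ H.V := hwf.left_sub hx
        have hfx : f x ∈ ((H.move x).union H').R := by
          rw [R_union (hwf.move x) hwf' (NegOf.disj_move_fst hdisj x)]
          exact Finset.mem_union_right _ (hn.mem_R' hx)
        have hne : ((H.move x).union H').R.Nonempty := ⟨f x, hfx⟩
        rw [sL2Aux_succ, dif_pos hne]
        have hfxV' : f x ∈ H'.V := hn.mem_V' hxV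
        have hmv : ((H.move x).union H').move (f x) =
            (H.move x).union (H'.move (f x)) :=
          move_union_snd (hwf.move x) hwf' (NegOf.disj_move_fst hdisj x)
            (move_relevant hwf x) hfxV'
        have hle := Finset.inf'_le (fun y => sL1Aux k (((H.move x).union H').move y)) hfx
        rw [hmv] at hle
        have hup := (ih (H.move x) (H'.move (f x)) f (hn.move' hxV)
          (move_relevant hwf x) (NegOf.disj_move_both hdisj x (f x))).1
        have hcard := card_move_add hwf hxV
        omega
      · intro y hy
        have hyV : y ∈ H.V := hwf.R_sub hy
        have hwf2 : (H'.move (f y)).WF := hwf'.move _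
        have hrel2 : (H'.move (f y)).Relevant := move_relevant hwf' _
        have hd : Disjoint H.V (H'.move (f y)).V := NegOf.disj_move_snd hdisj _
        have hyR : y ∈ (H.union (H'.move (f y))).R := by
          rw [R_union hwf hwf2 hd]
          exact Finset.mem_union_left _ hy
        have hne : (H.union (H'.move (f y))).R.Nonempty := ⟨y, hyR⟩
        rw [sL2Aux_succ, dif_pos hne]
        have hmv : (H.union (H'.move (f y))).move y =
            (H.move y).union (H'.move (f y)) :=
          move_union_fst hwf hwf2 hd hrel2 hyV
        have hle := Finset.inf'_le
          (fun z => sL1Aux k ((H.union (H'.move (f y))).move z)) hyR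
        rw [hmv] at hle
        have hup := (ih (H.move y) (H'.move (f y)) f (hn.move' hyV)
          (move_relevant hwf y) (NegOf.disj_move_both hdisj y (f y))).1
        have hcard := card_move_add hwf hyV
        omega

/-- Left's mirror strategy: lower bounds for the Left score. -/
lemma mirror_lower : ∀ k : ℕ, ∀ H H' : Pos α, ∀ f : α → α, NegOf H H' f →
    H.Relevant → Disjoint H.V H'.V →
    (H.V.card + H'.V.card ≤ k → H.V.card ≤ sL2Aux k (H.union H')) ∧
    (∀ y ∈ H.R, (H.move y).V.card + H'.V.card ≤ k →
      H.V.card ≤ sL1Aux k ((H.move y).union H')) ∧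
    (∀ x ∈ H.left, H.V.card + (H'.move (f x)).V.card ≤ k →
      H.V.card ≤ sL1Aux k (H.union (H'.move (f x)))) := by
  intro k
  induction k with
  | zero =>
      intro H H' f hn hrel hdisj
      have hcc := hn.card_V
      refine ⟨fun h => by omega, ?_, ?_⟩
      · intro y hy h
        rw [sL1Aux_zero]
        omega
      · intro x hx h
        rw [sL1Aux_zero]
        omega
  | succ k ih =>
      intro H H' f hn hrel hdisj
      have hwf := hn.wf
      have hwf' := hn.wf'
      have hrel' := hn.relevant' hrel
      have hcc := hn.card_V
      refine ⟨?_, ?_, ?_⟩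
      · intro hfuel
        by_cases hV0 : H.V.card = 0
        · rw [hV0]; exact Nat.zero_le _
        have hne : (H.union H').R.Nonempty := by
          rcases Finset.eq_empty_or_nonempty H.R with hRe | ⟨y, hy⟩
          · refine absurd (V_eq_empty_of_R_empty hwf hrel hRe) (fun h => hV0 ?_)
            rw [h]
            simp
          · refine ⟨y, ?_⟩
            rw [R_union hwf hwf' hdisj]
            exact Finset.mem_union_left _ hy
        rw [sL2Aux_succ, dif_pos hne]
        refine Finset.le_inf' hne _ ?_
        intro y hy
        rw [R_union hwf hwf' hdisj, Finset.mem_union] at hy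
        rcases hy with hy | hy
        · have hyV := hwf.R_sub hy
          rw [move_union_fst hwf hwf' hdisj hrel' hyV]
          refine (ih H H' f hn hrel hdisj).2.1 y hy ?_
          have := card_move_lt hwf hyV
          omega
        · rw [hn.hR] at hy
          rcases Finset.mem_image.1 hy with ⟨x, hx, rfl⟩
          have hfxV' : f x ∈ H'.V := hn.mem_V' (hwf.left_sub hx)
          rw [move_union_snd hwf hwf' hdisj hrel hfxV']
          refine (ih H H' f hn hrel hdisj).2.2 x hx ?_
          have := card_move_lt hwf' hfxV'
          omega
      · intro y hy hfuel
        have hyV := hwf.R_sub hy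
        have hd1 := NegOf.disj_move_fst (H := H) (H' := H') hdisj y
        have hwfm := hwf.move y
        have hfy : f y ∈ ((H.move y).union H').left := by
          rw [union_left]
          exact Finset.mem_union_right _ (hn.mem_left' hy)
        have hne : ((H.move y).union H').left.Nonempty := ⟨f y, hfy⟩
        rw [sL1Aux_succ, if_pos hne]
        have hfyV' := hn.mem_V' hyV
        have hRm : ((H.move y).union H').Rmv (f y) = H'.Rmv (f y) :=
          Rmv_union_snd hwfm hwf' hd1 (move_relevant hwf y) hfyV'
        have hmv : ((H.move y).union H').move (f y) =
            (H.move y).union (H'.move (f y)) :=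
          move_union_snd hwfm hwf' hd1 (move_relevant hwf y) hfyV'
        have hsup : (((H.move y).union H').Rmv (f y)).card +
            sL2Aux k (((H.move y).union H').move (f y)) ≤
            ((H.move y).union H').left.sup (fun x =>
              (((H.move y).union H').Rmv x).card +
                sL2Aux k (((H.move y).union H').move x)) :=
          by
            exact Finset.le_sup (f := fun x =>
              (((H.move y).union H').Rmv x).card +
                sL2Aux k (((H.move y).union H').move x)) hfy
        rw [hRm, hmv] at hsup
        have hcm : (H'.move (f y)).V.card = (H.move y).V.card :=
          (hn.move' hyV).card_V
        have hlt := card_move_lt hwf hyV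
        have hfuel2 : (H.move y).V.card + (H'.move (f y)).V.card ≤ k := by omega
        have hlow := (ih (H.move y) (H'.move (f y)) f (hn.move' hyV)
          (move_relevant hwf y) (NegOf.disj_move_both hdisj y (f y))).1 hfuel2
        have hcr := hn.card_rmv hyV
        have hca := card_move_add hwf hyV
        omega
      · intro x hx hfuel
        have hxV := hwf.left_sub hx
        have hwf2 := hwf'.move (f x)
        have hrel2 := move_relevant hwf' (f x)
        have hd2 := NegOf.disj_move_snd (H := H) (H' := H') hdisj (f x)
        have hxl : x ∈ (H.union (H'.move (f x))).left := by
          rw [union_left]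
          exact Finset.mem_union_left _ hx
        have hne : (H.union (H'.move (f x))).left.Nonempty := ⟨x, hxl⟩
        rw [sL1Aux_succ, if_pos hne]
        have hRm : (H.union (H'.move (f x))).Rmv x = H.Rmv x :=
          Rmv_union_fst hwf hwf2 hd2 hrel2 hxV
        have hmv : (H.union (H'.move (f x))).move x =
            (H.move x).union (H'.move (f x)) :=
          move_union_fst hwf hwf2 hd2 hrel2 hxV
        have hsup : ((H.union (H'.move (f x))).Rmv x).card +
            sL2Aux k ((H.union (H'.move (f x))).move x) ≤
            (H.union (H'.move (f x))).left.sup (fun z =>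
              ((H.union (H'.move (f x))).Rmv z).card +
                sL2Aux k ((H.union (H'.move (f x))).move z)) :=
          by
            exact Finset.le_sup (f := fun z =>
              ((H.union (H'.move (f x))).Rmv z).card +
                sL2Aux k ((H.union (H'.move (f x))).move z)) hxl
        rw [hRm, hmv] at hsup
        have hcm : (H'.move (f x)).V.card = (H.move x).V.card :=
          (hn.move' hxV).card_V
        have hlt := card_move_lt hwf hxV
        have hfuel2 : (H.move x).V.card + (H'.move (f x)).V.card ≤ k := by omega
        have hlow := (ih (H.move x) (H'.move (f x)) f (hn.move' hxV)
          (move_relevant hwf x) (NegOf.disj_move_both hdisj x (f x))).1 hfuel2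
        have hca := card_move_add hwf hxV
        omega

end Pos
end Influence
namespace Influence
namespace Pos

variable {α : Type} [DecidableEq α]

/-- Monotonicity: a Right move cannot increase Left's scores. -/
lemma mono : ∀ n : ℕ, ∀ G : Pos α, G.V.card ≤ n → G.WF → G.Relevant →
    (∀ y ∈ G.R, sL1 (G.move y) ≤ sL1 G) ∧ (G.sL2 ≤ G.sL1) ∧
    (∀ y ∈ G.R, sL2 (G.move y) ≤ sL2 G) := by
  intro n
  induction n with
  | zero =>
      intro G hcard hwf hrel
      have hV : G.V = ∅ := Finset.card_eq_zero.1 (Nat.le_zero.1 hcard)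
      have hR : G.R = ∅ := by rw [Pos.R, hV]; exact Finset.empty_sdiff _
      refine ⟨?_, ?_, ?_⟩
      · intro y hy; rw [hR] at hy; exact absurd hy (Finset.notMem_empty y)
      · rw [sL2_eq hwf, dif_neg (by rw [hR]; simp)]
        exact Nat.zero_le _
      · intro y hy; rw [hR] at hy; exact absurd hy (Finset.notMem_empty y)
  | succ n ih =>
      intro G hcard hwf hrel
      have ihm : ∀ z, z ∈ G.V →
          ((∀ y ∈ (G.move z).R, sL1 ((G.move z).move y) ≤ sL1 (G.move z)) ∧
           ((G.move z).sL2 ≤ (G.move z).sL1) ∧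
           (∀ y ∈ (G.move z).R, sL2 ((G.move z).move y) ≤ sL2 (G.move z))) := by
        intro z hz
        refine ih (G.move z) ?_ (hwf.move z) (move_relevant hwf z)
        have := card_move_lt hwf hz
        omega
      have M1 : ∀ y ∈ G.R, sL1 (G.move y) ≤ sL1 G := by
        intro y hy
        have hyV := hwf.R_sub hy
        rw [sL1_eq (hwf.move y)]
        by_cases hne : (G.move y).left.Nonempty
        · rw [if_pos hne]
          refine Finset.sup_le ?_
          intro x hx
          rw [move, erase_left, Finset.mem_sdiff] at hx
          obtain ⟨hxl, hxn⟩ := hx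
          have hxV := hwf.left_sub hxl
          have hyx : y ∉ G.Rmv x := right_survivor_sym hwf hrel hxl hy hxn
          have hRmv : (G.move y).Rmv x = G.Rmv x \ G.Rmv y :=
            Rmv_move_cross' hwf hrel hxl hy hyx hxn
          have hmm : (G.move y).move x = (G.move x).move y := by
            rw [move_move_cross' hwf hrel hxl hy hyx hxn,
              move_move_cross hwf hrel hxl hy hyx hxn, Finset.union_comm]
          have hc1 : ((G.move y).Rmv x).card ≤ (G.Rmv x).card := by
            rw [hRmv]
            exact Finset.card_le_card Finset.sdiff_subset
          have hyR' : y ∈ (G.move x).R := by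
            rw [move, erase_R, Finset.mem_sdiff]
            exact ⟨hy, hyx⟩
          have hc2 : sL2 ((G.move y).move x) ≤ sL2 (G.move x) := by
            rw [hmm]
            exact (ihm x hxV).2.2 y hyR'
          have hc3 : (G.Rmv x).card + sL2 (G.move x) ≤ sL1 G := by
            rw [sL1_eq hwf, if_pos ⟨x, hxl⟩]
            exact Finset.le_sup (f := fun z =>
              (G.Rmv z).card + sL2 (G.move z)) hxl
          -- hx was destructed; conclude
          omega
        · rw [if_neg hne]
          exact Nat.zero_le _
      have M0 : G.sL2 ≤ G.sL1 := by
        rw [sL2_eq hwf]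
        by_cases hne : G.R.Nonempty
        · rw [dif_pos hne]
          obtain ⟨y₀, hy₀, heq⟩ :=
            Finset.exists_mem_eq_inf' hne (fun z => sL1 (G.move z))
          rw [heq]
          exact M1 y₀ hy₀
        · rw [dif_neg hne]
          exact Nat.zero_le _
      refine ⟨M1, M0, ?_⟩
      intro y hy
      have hyV := hwf.R_sub hy
      have hne : G.R.Nonempty := ⟨y, hy⟩
      rw [sL2_eq hwf, dif_pos hne]
      obtain ⟨y₀, hy₀, heq⟩ :=
        Finset.exists_mem_eq_inf' hne (fun z => sL1 (G.move z))
      rw [heq]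
      have hy₀V := hwf.R_sub hy₀
      by_cases h1 : y₀ ∈ G.Rmv y
      · by_cases h2 : y ∈ G.Rmv y₀
        · have hRe : G.Rmv y = G.Rmv y₀ :=
            Finset.Subset.antisymm (Rmv_mono_right hwf hrel hy₀ hy h2)
              (Rmv_mono_right hwf hrel hy hy₀ h1)
          have hGm : G.move y = G.move y₀ := by
            unfold move
            rw [hRe]
          rw [hGm]
          exact (ihm y₀ hy₀V).2.1
        · have hmv : (G.move y₀).move y = G.move y :=
            move_move_se2_right hwf hrel hy₀ hy h2 h1
          have hyR' : y ∈ (G.move y₀).R := by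
            rw [move, erase_R, Finset.mem_sdiff]
            exact ⟨hy, h2⟩
          calc sL2 (G.move y) = sL2 ((G.move y₀).move y) := by rw [hmv]
            _ ≤ sL2 (G.move y₀) := (ihm y₀ hy₀V).2.2 y hyR'
            _ ≤ sL1 (G.move y₀) := (ihm y₀ hy₀V).2.1
      · have hy₀R : y₀ ∈ (G.move y).R := by
          rw [move, erase_R, Finset.mem_sdiff]
          exact ⟨hy₀, h1⟩
        have hne' : (G.move y).R.Nonempty := ⟨y₀, hy₀R⟩
        rw [sL2_eq (hwf.move y), dif_pos hne']
        have hinf : (G.move y).R.inf' hne' (fun z => sL1 ((G.move y).move z)) ≤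
            sL1 ((G.move y).move y₀) := by
          exact Finset.inf'_le (f := fun z => sL1 ((G.move y).move z)) hy₀R
        refine le_trans hinf ?_
        by_cases h2 : y ∈ G.Rmv y₀
        · rw [move_move_se2_right hwf hrel hy hy₀ h1 h2]
        · rw [move_move_se1_right hwf hrel hy hy₀ h1 h2]
          have hyR' : y ∈ (G.move y₀).R := by
            rw [move, erase_R, Finset.mem_sdiff]
            exact ⟨hy, h2⟩
          exact (ihm y₀ hy₀V).1 y hyR'

end Pos
end Influence
namespace Influence
namespace Pos

variable {α : Type} [DecidableEq α]

lemma NegOf.op' {H H' : Pos α} {f : α → α} (hn : NegOf H H' f) :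
    NegOf (op H) (op H') f := by
  refine ⟨hn.wf.op, ?_, ?_, ?_, ?_⟩
  · show Set.InjOn f ↑H.V
    exact hn.inj
  · show H'.V = H.V.image f
    exact hn.hV
  · show H'.R = ((op H).R).image f
    rw [op_R hn.wf, hn.hR]
  · show H'.A.image Prod.swap = (H.A.image Prod.swap).image (fun p => (f p.2, f p.1))
    rw [hn.hA, Finset.image_image, Finset.image_image]
    rfl

lemma op_union {G1 G2 : Pos α} (h1 : G1.WF) (h2 : G2.WF)
    (hdisj : Disjoint G1.V G2.V) :
    op (G1.union G2) = (op G1).union (op G2) := by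
  refine ext' rfl ?_ ?_
  · show (G1.A ∪ G2.A).image Prod.swap = G1.A.image Prod.swap ∪ G2.A.image Prod.swap
    exact Finset.image_union _ _
  · show (G1.union G2).R = G1.R ∪ G2.R
    exact R_union h1 h2 hdisj

end Pos
end Influence

/-- `H + (−H)` has Left score and Right score `0`, where `−H` is a disjoint
copy of `H` with the colours exchanged and all arcs reversed. -/
theorem influence_sum_with_negative {α : Type} [DecidableEq α] (H H' : Pos α)
    (hwf : H.WF) (hrel : H.Relevant) (f : α → α)
    (hinj : Set.InjOn f ↑H.V)
    (hV : H'.V = H.V.image f)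
    (hL : H'.left = H.R.image f)
    (hA : H'.A = H.A.image (fun p => (f p.2, f p.1)))
    (hdisj : Disjoint H.V H'.V) :
    (H.union H').Ls = 0 ∧ (H.union H').Rs = 0 := by
  have hn : NegOf H H' f := ⟨hwf, hinj, hV, hL, hA⟩
  have hwf' : H'.WF := hn.wf'
  have hrel' : H'.Relevant := hn.relevant' hrel
  have hGwf : (H.union H').WF := hwf.union hwf'
  have hGrel : (H.union H').Relevant := Relevant.union hwf hwf' hdisj hrel hrel'
  have hcardG : (H.union H').V.card = H.V.card + H'.V.card := by
    show (H.V ∪ H'.V).card = _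
    rw [Finset.card_union_of_disjoint hdisj]
  -- Left side
  have h1 : (H.union H').sL1 ≤ H.V.card :=
    (mirror_upper (H.union H').V.card H H' f hn hrel hdisj).1
  have h2 : H.V.card ≤ (H.union H').sL2 := by
    refine (mirror_lower (H.union H').V.card H H' f hn hrel hdisj).1 ?_
    omega
  have h3 : (H.union H').sL2 ≤ (H.union H').sL1 :=
    (mono (H.union H').V.card (H.union H') le_rfl hGwf hGrel).2.1
  have hL1 : (H.union H').sL1 = H.V.card := le_antisymm h1 (le_trans h2 h3)
  have hL2 : (H.union H').sL2 = H.V.card := le_antisymm (h3.trans h1) h2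
  -- Right side via op
  have hnop : NegOf (Pos.op H) (Pos.op H') f := hn.op'
  have hopU : Pos.op (H.union H') = (Pos.op H).union (Pos.op H') :=
    op_union hwf hwf' hdisj
  have hdop : Disjoint (Pos.op H).V (Pos.op H').V := hdisj
  have hcardop : (Pos.op (H.union H')).V.card = (H.union H').V.card := rfl
  have h1' : sL1 (Pos.op (H.union H')) ≤ H.V.card := by
    rw [hopU]
    have := (mirror_upper ((Pos.op H).union (Pos.op H')).V.card (Pos.op H)
      (Pos.op H') f hnop (hrel.op hwf) hdop).1
    exact this
  have h2' : H.V.card ≤ sL2 (Pos.op (H.union H')) := by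
    rw [hopU]
    refine (mirror_lower ((Pos.op H).union (Pos.op H')).V.card (Pos.op H)
      (Pos.op H') f hnop (hrel.op hwf) hdop).1 ?_
    have hc2 : ((Pos.op H).union (Pos.op H')).V.card = H.V.card + H'.V.card := by
      show (H.V ∪ H'.V).card = _
      rw [Finset.card_union_of_disjoint hdisj]
    rw [hc2, op_V, op_V]
  have h3' : sL2 (Pos.op (H.union H')) ≤ sL1 (Pos.op (H.union H')) :=
    (mono (Pos.op (H.union H')).V.card (Pos.op (H.union H')) le_rfl
      hGwf.op (hGrel.op hGwf)).2.1
  have hR1 : (H.union H').sR1 = H.V.card := by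
    rw [sR1_op hGwf]
    exact le_antisymm h1' (le_trans h2' h3')
  have hR2 : (H.union H').sR2 = H.V.card := by
    rw [sR2_op hGwf]
    exact le_antisymm (h3'.trans h1') h2'
  constructor
  · show ((H.union H').sL1 : ℤ) - ((H.union H').sR2 : ℤ) = 0
    rw [hL1, hR2]
    ring
  · show ((H.union H').sL2 : ℤ) - ((H.union H').sR1 : ℤ) = 0
    rw [hL2, hR1]
    ring
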